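/- arXiv:1510.05374 — 3 statements merged into one kernel-verified Lean document; each statement's English description precedes it below -/
import Mathlib

section
/- For every 1 ≤ i ≤ n-2 and all nonzero complex numbers u₁, u₂, u₃ that are pairwise distinct and satisfy ν u₂ + q u₃ ≠ 0, ν u₁ + q u₃ ≠ 0, ν u₁ + q u₂ ≠ 0, the baxterized elements satisfy the braid (Yang–Baxter) relation T_i(u₂,u₃) T_{i+1}(u₁,u₃) T_i(u₁,u₂) = T_{i+1}(u₁,u₂) T_i(u₁,u₃) T_{i+1}(u₂,u₃). -/
/-- The BMW element `κ = 1 - (T - T⁻¹)/(q - q⁻¹)` attached to an invertible element `T`. -/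
noncomputable def kap {A : Type*} [Ring A] [Algebra ℂ A] (q : ℂ) (x : Aˣ) : A :=
  1 - (q - q⁻¹)⁻¹ • ((x : A) - ((x⁻¹ : Aˣ) : A))

/-- The baxterized element
`T(u,v) = T + (q - q⁻¹)/(v/u - 1) + (q - q⁻¹)/(1 + ν⁻¹ q v/u) · κ`. -/
noncomputable def bax {A : Type*} [Ring A] [Algebra ℂ A] (q ν : ℂ) (x : Aˣ) (u v : ℂ) : A :=
  (x : A) + ((q - q⁻¹) / (v / u - 1)) • (1 : A) +
    ((q - q⁻¹) / (1 + ν⁻¹ * q * v / u)) • kap q x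

lemma bax_eq {A : Type*} [Ring A] [Algebra ℂ A] (q ν : ℂ) (hν : ν ≠ 0) (x : Aˣ) (u v : ℂ)
    (hu : u ≠ 0) :
    bax q ν x u v = (x : A) + ((q - q⁻¹) * u / (v - u)) • (1 : A)
      + ((q - q⁻¹) * (ν * u) / (ν * u + q * v)) • kap q x := by
  have h1 : (q - q⁻¹) / (v / u - 1) = (q - q⁻¹) * u / (v - u) := by
    rw [show v / u - 1 = (v - u) / u by rw [sub_div, div_self hu], div_div_eq_mul_div]
  have h2 : (q - q⁻¹) / (1 + ν⁻¹ * q * v / u) = (q - q⁻¹) * (ν * u) / (ν * u + q * v) := by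
    rw [show (1 : ℂ) + ν⁻¹ * q * v / u = (ν * u + q * v) / (ν * u) by field_simp,
      div_div_eq_mul_div]
  simp only [bax, h1, h2]


lemma bax_smul {A : Type*} [Ring A] [Algebra ℂ A] (q ν u v : ℂ) (hν : ν ≠ 0)
    (hu : u ≠ 0) (huv : v - u ≠ 0) (hdz : ν * u + q * v ≠ 0) (x : Aˣ) :
    ((v - u) * (ν * u + q * v)) • bax q ν x u v
      = ((v - u) * (ν * u + q * v)) • (x : A)
        + ((q - q⁻¹) * u * (ν * u + q * v)) • (1 : A)
        + ((q - q⁻¹) * (ν * u) * (v - u)) • kap q x := by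
  have e1 : ((v - u) * (ν * u + q * v)) * ((q - q⁻¹) * u / (v - u))
      = (q - q⁻¹) * u * (ν * u + q * v) := by
    field_simp
  have e2 : ((v - u) * (ν * u + q * v)) * ((q - q⁻¹) * (ν * u) / (ν * u + q * v))
      = (q - q⁻¹) * (ν * u) * (v - u) := by
    rw [mul_div_assoc', div_eq_iff hdz]
    ring
  rw [bax_eq q ν hν x u v hu, smul_add, smul_add, smul_smul, smul_smul, e1, e2]

lemma bmw_expand3 {A : Type*} [Ring A] [Algebra ℂ A] (d ν w m : ℂ)
    (s t k l : A)
    (Hss : s * s = 1 + d • s - (d * ν) • k)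
    (Hsk : s * k = ν • k) (Hks : k * s = ν • k)
    (Hkk : k * k = m • k)
    (Hktk : k * (t * k) = w • k)
    (Hklk : k * (l * k) = k)
    (Hstk : s * (t * k) = l * k)
    (Hkts : k * (t * s) = k * l)
    (Hkls : k * (l * s) = k * t - d • k + d • (k * l))
    (Hslk : s * (l * k) = t * k - d • k + d • (l * k))
    (Hsls : s * (l * s) = t * (k * t) - d • (t * k) - d • (k * t) + d • (s * l) + d • (l * s)
      + (d * d) • k - (d * d) • l)
    (a₁ b₁ c₁ a₂ b₂ c₂ a₃ b₃ c₃ : ℂ) :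
    (a₁ • s + b₁ • (1 : A) + c₁ • k) * ((a₂ • t + b₂ • (1 : A) + c₂ • l) * (a₃ • s + b₃ • (1 : A) + c₃ • k)) =
      (a₁ * b₂ * a₃ + b₁ * b₂ * b₃) • (1 : A)
      + (d * (a₁ * b₂ * a₃) + a₁ * b₂ * b₃ + b₁ * b₂ * a₃) • s + (b₁ * a₂ * b₃) • t
      + (a₁ * a₂ * b₃) • (s * t) + (b₁ * a₂ * a₃) • (t * s) + (a₁ * a₂ * a₃) • (s * (t * s))
      + (- (d * ν * (a₁ * b₂ * a₃)) + ν * (a₁ * b₂ * c₃) + d * d * (a₁ * c₂ * a₃)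
          - d * (a₁ * c₂ * c₃) + b₁ * b₂ * c₃ + w * (c₁ * a₂ * c₃) + ν * (c₁ * b₂ * a₃)
          + c₁ * b₂ * b₃ + m * (c₁ * b₂ * c₃) - d * (c₁ * c₂ * a₃) + c₁ * c₂ * c₃) • k
      + (- (d * d * (a₁ * c₂ * a₃)) + b₁ * c₂ * b₃) • l
      + (c₁ * a₂ * a₃ + d * (c₁ * c₂ * a₃) + c₁ * c₂ * b₃) • (k * l)
      + (a₁ * a₂ * c₃ + d * (a₁ * c₂ * c₃) + b₁ * c₂ * c₃) • (l * k)
      + (- (d * (a₁ * c₂ * a₃)) + c₁ * a₂ * b₃ + c₁ * c₂ * a₃) • (k * t)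
      + (- (d * (a₁ * c₂ * a₃)) + a₁ * c₂ * c₃ + b₁ * a₂ * c₃) • (t * k)
      + (d * (a₁ * c₂ * a₃) + a₁ * c₂ * b₃) • (s * l)
      + (d * (a₁ * c₂ * a₃) + b₁ * c₂ * a₃) • (l * s)
      + (a₁ * c₂ * a₃) • (t * (k * t)) := by
  simp only [add_mul, mul_add, smul_mul_assoc, mul_smul_comm, mul_one, one_mul, smul_smul,
    mul_assoc]
  rw [Hss, Hsk, Hks, Hkk, Hktk, Hklk, Hstk, Hkts, Hkls, Hslk, Hsls]
  match_scalars <;> ring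

lemma bmw_derive {A : Type*} [Ring A] [Algebra ℂ A] (d ν : ℂ) (hν : ν ≠ 0) (hδ : d ≠ 0)
    (s s' t t' k l : A)
    (hss' : s * s' = 1) (htt' : t * t' = 1) (ht't : t' * t = 1)
    (hk : k = 1 - d⁻¹ • (s - s')) (hl : l = 1 - d⁻¹ • (t - t'))
    (hbr : s * t * s = t * s * t)
    (hsk : s * k = ν • k) (hks : k * s = ν • k)
    (hktk : k * (t * k) = ν⁻¹ • k) (hkt'k : k * (t' * k) = ν • k) :
    s' = s - d • (1 : A) + d • k ∧
    s * s = 1 + d • s - (d * ν) • k ∧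
    k * k = (1 - d⁻¹ * (ν - ν⁻¹)) • k ∧
    k * (l * k) = k ∧
    s * (t * k) = l * (s * t) ∧
    k * (t * s) = k * l ∧
    k * (l * s) = k * t - d • k + d • (k * l) := by
  have hP1 : s' = s - d • (1 : A) + d • k := by
    have h : d • k = d • (1 : A) - (s - s') := by
      rw [hk, smul_sub, smul_smul, mul_inv_cancel₀ hδ, one_smul]
    rw [h]; abel
  have ht'eq : t' = t - d • (1 : A) + d • l := by
    have h : d • l = d • (1 : A) - (t - t') := by
      rw [hl, smul_sub, smul_smul, mul_inv_cancel₀ hδ, one_smul]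
    rw [h]; abel
  have hseq : s = s' + d • (1 : A) - d • k := by rw [hP1]; abel
  have hteq : t = t' + d • (1 : A) - d • l := by rw [ht'eq]; abel
  have hP2 : s * s = 1 + d • s - (d * ν) • k := by
    have h : s * s' = s * s - d • s + (d * ν) • k := by
      rw [hP1]
      simp only [mul_add, mul_sub, mul_smul_comm, mul_one, hsk, smul_smul]
    rw [← hss', h]; abel
  have hks' : k * s' = ν⁻¹ • k := by
    have h : k * (s * s') = ν • (k * s') := by rw [← mul_assoc, hks, smul_mul_assoc]
    rw [hss', mul_one] at h
    have h2 : ν⁻¹ • k = ν⁻¹ • (ν • (k * s')) := by rw [← h]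
    rw [smul_smul, inv_mul_cancel₀ hν, one_smul] at h2
    exact h2.symm
  have hP3 : k * k = (1 - d⁻¹ * (ν - ν⁻¹)) • k := by
    have h : k * k = k * (1 - d⁻¹ • (s - s')) := by rw [← hk]
    rw [h, mul_sub, mul_one, mul_smul_comm, mul_sub, hks, hks']
    module
  have hP4 : k * (l * k) = k := by
    have h1 : l * k = k - d⁻¹ • (t * k - t' * k) := by
      rw [hl, sub_mul, one_mul, smul_mul_assoc, sub_mul]
    rw [h1, mul_sub, mul_smul_comm, mul_sub, hktk, hkt'k, hP3]
    match_scalars <;> field_simp <;> ring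
  have hbr' : s * (t * s) = t * (s * t) := by
    simpa only [mul_assoc] using hbr
  have hC1 : s * (t * s') = t' * (s * t) := by
    have h := congrArg (fun z => t' * (z * s')) hbr
    simp only [mul_assoc] at h
    rw [hss', mul_one] at h
    rw [← mul_assoc t' t, ht't, one_mul] at h
    exact h.symm
  have hP5 : s * (t * k) = l * (s * t) := by
    rw [hk, hl]
    simp only [mul_sub, sub_mul, mul_one, one_mul, mul_smul_comm, smul_mul_assoc, mul_assoc]
    rw [hC1, hbr']
  have hA1 : k * (l * (s * t)) = k := by
    rw [← hP5, ← mul_assoc k s, hks, smul_mul_assoc, hktk, smul_smul,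
      mul_inv_cancel₀ hν, one_smul]
  have hA2 : k * (l * s) = k * t' := by
    have h : k * (l * s) * t = k := by rw [mul_assoc, mul_assoc]; exact hA1
    have h2 := congrArg (· * t') h
    rw [mul_assoc (k * (l * s)) t t', htt', mul_one] at h2
    exact h2
  have hA2b : k * (t' * s') = k * l := by
    calc k * (t' * s') = (k * t') * s' := (mul_assoc _ _ _).symm
      _ = (k * (l * s)) * s' := by rw [← hA2]
      _ = k * (l * (s * s')) := by simp only [mul_assoc]
      _ = k * l := by rw [hss', mul_one]
  have hA3 : k * (l * s') = k * t' - d • (k * l) + d • k := by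
    rw [hP1]
    simp only [mul_add, mul_sub, mul_smul_comm, mul_one]
    rw [hA2, hP4]
  have hP6 : k * (t * s) = k * l := by
    conv_lhs => rw [hteq, hseq]
    simp only [mul_add, add_mul, mul_sub, sub_mul, mul_smul_comm, smul_mul_assoc, mul_one,
      one_mul, smul_smul, smul_sub, smul_add, mul_assoc]
    rw [hkt'k, hks', hA3, hP4, hP3, hA2b]
    match_scalars <;> field_simp <;> ring
  have hP7 : k * (l * s) = k * t - d • k + d • (k * l) := by
    rw [hA2, ht'eq]
    simp only [mul_add, mul_sub, mul_smul_comm, mul_one]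
  exact ⟨hP1, hP2, hP3, hP4, hP5, hP6, hP7⟩

set_option maxHeartbeats 4000000 in
lemma bmw_yb {A : Type*} [Ring A] [Algebra ℂ A] (q ν : ℂ)
    (hq0 : q ≠ 0) (hν : ν ≠ 0) (hq1 : q ^ 2 ≠ 1) (X Y : Aˣ)
    (hbr : (X : A) * Y * X = (Y : A) * X * Y)
    (hkX : kap q X * X = ν • kap q X) (hXk : (X : A) * kap q X = ν • kap q X)
    (hlY : kap q Y * Y = ν • kap q Y) (hYl : (Y : A) * kap q Y = ν • kap q Y)
    (hlsl : kap q Y * X * kap q Y = ν⁻¹ • kap q Y)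
    (hls'l : kap q Y * ((X⁻¹ : Aˣ) : A) * kap q Y = ν • kap q Y)
    (hktk : kap q X * Y * kap q X = ν⁻¹ • kap q X)
    (hkt'k : kap q X * ((Y⁻¹ : Aˣ) : A) * kap q X = ν • kap q X)
    (u₁ u₂ u₃ : ℂ) (hu₁ : u₁ ≠ 0) (hu₂ : u₂ ≠ 0) (hu₃ : u₃ ≠ 0)
    (h12 : u₁ ≠ u₂) (h13 : u₁ ≠ u₃) (h23 : u₂ ≠ u₃)
    (hn23 : ν * u₂ + q * u₃ ≠ 0) (hn13 : ν * u₁ + q * u₃ ≠ 0) (hn12 : ν * u₁ + q * u₂ ≠ 0) :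
    bax q ν X u₂ u₃ * bax q ν Y u₁ u₃ * bax q ν X u₁ u₂ =
      bax q ν Y u₁ u₂ * bax q ν X u₁ u₃ * bax q ν Y u₂ u₃ := by
  have hδ : q - q⁻¹ ≠ 0 := by
    intro h
    apply hq1
    have hq : q = q⁻¹ := sub_eq_zero.mp h
    rw [sq]
    nth_rewrite 2 [hq]
    exact mul_inv_cancel₀ hq0
  have h32 : u₃ - u₂ ≠ 0 := sub_ne_zero.mpr (Ne.symm h23)
  have h31 : u₃ - u₁ ≠ 0 := sub_ne_zero.mpr (Ne.symm h13)
  have h21 : u₂ - u₁ ≠ 0 := sub_ne_zero.mpr (Ne.symm h12)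
  obtain ⟨P1, P2, P3, P4, P5, P6, P7⟩ :=
    bmw_derive (q - q⁻¹) ν hν hδ (X : A) ((X⁻¹ : Aˣ) : A) (Y : A) ((Y⁻¹ : Aˣ) : A)
      (kap q X) (kap q Y) (Units.mul_inv X) (Units.mul_inv Y) (Units.inv_mul Y) rfl rfl
      hbr hXk hkX (by rw [← mul_assoc]; exact hktk) (by rw [← mul_assoc]; exact hkt'k)
  obtain ⟨Q1, Q2, Q3, Q4, Q5, Q6, Q7⟩ :=
    bmw_derive (q - q⁻¹) ν hν hδ (Y : A) ((Y⁻¹ : Aˣ) : A) (X : A) ((X⁻¹ : Aˣ) : A)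
      (kap q Y) (kap q X) (Units.mul_inv Y) (Units.mul_inv X) (Units.inv_mul X) rfl rfl
      hbr.symm hYl hlY (by rw [← mul_assoc]; exact hlsl) (by rw [← mul_assoc]; exact hls'l)
  set s : A := (X : A) with hs
  set t : A := (Y : A) with ht
  set s' : A := ((X⁻¹ : Aˣ) : A) with hs'
  set t' : A := ((Y⁻¹ : Aˣ) : A) with ht'
  set k : A := kap q X with hk0
  set l : A := kap q Y with hl0
  have htt' : t * t' = 1 := Units.mul_inv Y
  have ht't : t' * t = 1 := Units.inv_mul Y
  -- combined lemmas
  have Hstk : s * (t * k) = l * k := P5.trans Q6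
  have Htsl : t * (s * l) = k * l := Q5.trans P6
  have PreSlk : s * (l * k) = t' * k := by
    have h : t * (s * (l * k)) = k := by
      rw [show t * (s * (l * k)) = (t * (s * l)) * k by simp only [mul_assoc], Htsl,
        mul_assoc, P4]
    have h2 := congrArg (fun z => t' * z) h
    rw [← mul_assoc t' t, ht't, one_mul] at h2
    exact h2
  have Hslk : s * (l * k) = t * k - (q - q⁻¹) • k + (q - q⁻¹) • (l * k) := by
    rw [PreSlk, Q1]
    simp only [sub_mul, add_mul, smul_mul_assoc, one_mul]
  have PreTkl : t * (k * l) = s' * l := by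
    have h : s * (t * (k * l)) = l := by
      rw [show s * (t * (k * l)) = (s * (t * k)) * l by simp only [mul_assoc], Hstk,
        mul_assoc, Q4]
    have h2 := congrArg (fun z => s' * z) h
    rw [← mul_assoc s' s, Units.inv_mul, one_mul] at h2
    exact h2
  have Htkl : t * (k * l) = s * l - (q - q⁻¹) • l + (q - q⁻¹) • (k * l) := by
    rw [PreTkl, P1]
    simp only [sub_mul, add_mul, smul_mul_assoc, one_mul]
  have PreSls : s * (l * s) = (t' * k) * t' := by
    have h : (s * (l * s)) * t = t' * k := by
      rw [show (s * (l * s)) * t = s * (l * (s * t)) by simp only [mul_assoc], Q6, PreSlk]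
    have h2 := congrArg (fun z => z * t') h
    rw [mul_assoc (s * (l * s)) t t', htt', mul_one] at h2
    exact h2
  have Hsls : s * (l * s) = t * (k * t) - (q - q⁻¹) • (t * k) - (q - q⁻¹) • (k * t) + (q - q⁻¹) • (s * l) + (q - q⁻¹) • (l * s)
      + ((q - q⁻¹) * (q - q⁻¹)) • k - ((q - q⁻¹) * (q - q⁻¹)) • l := by
    rw [PreSls, Q1]
    simp only [sub_mul, add_mul, mul_sub, mul_add, smul_mul_assoc, mul_smul_comm, one_mul,
      mul_one, smul_smul, smul_sub, smul_add, mul_assoc]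
    rw [Htkl, Q7, Q4]
    match_scalars <;> ring
  have Htkt : t * (k * t) = s * (l * s) - (q - q⁻¹) • (s * l) - (q - q⁻¹) • (l * s) + (q - q⁻¹) • (t * k) + (q - q⁻¹) • (k * t)
      + ((q - q⁻¹) * (q - q⁻¹)) • l - ((q - q⁻¹) * (q - q⁻¹)) • k := by
    rw [Hsls]
    module
  have hbr'' : t * (s * t) = s * (t * s) := by
    simpa only [mul_assoc] using hbr.symm
  -- clear denominators and expand
  have smul3 : ∀ (g1 g2 g3 : ℂ) (x y z : A),
      (g1 * (g2 * g3)) • (x * y * z) = (g1 • x) * ((g2 • y) * (g3 • z)) := by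
    intro g1 g2 g3 x y z
    simp only [smul_mul_assoc, mul_smul_comm, smul_smul, mul_assoc]
    congr 1
    ring
  have hγ : ((u₃ - u₂) * (ν * u₂ + q * u₃)) * (((u₃ - u₁) * (ν * u₁ + q * u₃)) *
      ((u₂ - u₁) * (ν * u₁ + q * u₂))) ≠ 0 :=
    mul_ne_zero (mul_ne_zero h32 hn23)
      (mul_ne_zero (mul_ne_zero h31 hn13) (mul_ne_zero h21 hn12))
  have cancel : ∀ x y : A,
      (((u₃ - u₂) * (ν * u₂ + q * u₃)) * (((u₃ - u₁) * (ν * u₁ + q * u₃)) *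
        ((u₂ - u₁) * (ν * u₁ + q * u₂)))) • x =
      (((u₃ - u₂) * (ν * u₂ + q * u₃)) * (((u₃ - u₁) * (ν * u₁ + q * u₃)) *
        ((u₂ - u₁) * (ν * u₁ + q * u₂)))) • y → x = y := by
    intro x y h
    have h2 := congrArg (fun z : A =>
      (((u₃ - u₂) * (ν * u₂ + q * u₃)) * (((u₃ - u₁) * (ν * u₁ + q * u₃)) *
        ((u₂ - u₁) * (ν * u₁ + q * u₂))))⁻¹ • z) h
    simpa only [smul_smul, inv_mul_cancel₀ hγ, one_smul] using h2
  apply cancel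
  conv_rhs => rw [show ((u₃ - u₂) * (ν * u₂ + q * u₃)) * (((u₃ - u₁) * (ν * u₁ + q * u₃)) *
      ((u₂ - u₁) * (ν * u₁ + q * u₂))) = ((u₂ - u₁) * (ν * u₁ + q * u₂)) *
      (((u₃ - u₁) * (ν * u₁ + q * u₃)) * ((u₃ - u₂) * (ν * u₂ + q * u₃))) from by ring]
  rw [smul3, smul3]
  rw [bax_smul q ν u₂ u₃ hν hu₂ h32 hn23 X, bax_smul q ν u₁ u₃ hν hu₁ h31 hn13 Y,
    bax_smul q ν u₁ u₂ hν hu₁ h21 hn12 X, bax_smul q ν u₁ u₂ hν hu₁ h21 hn12 Y,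
    bax_smul q ν u₁ u₃ hν hu₁ h31 hn13 X, bax_smul q ν u₂ u₃ hν hu₂ h32 hn23 Y]
  rw [← hs, ← ht, ← hk0, ← hl0]
  rw [bmw_expand3 (q - q⁻¹) ν ν⁻¹ (1 - (q - q⁻¹)⁻¹ * (ν - ν⁻¹)) s t k l P2 hXk hkX P3
      (by rw [← mul_assoc]; exact hktk) P4 Hstk P6 P7 Hslk Hsls,
    bmw_expand3 (q - q⁻¹) ν ν⁻¹ (1 - (q - q⁻¹)⁻¹ * (ν - ν⁻¹)) t s l k Q2 hYl hlY Q3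
      (by rw [← mul_assoc]; exact hlsl) Q4 Htsl Q6 Q7 Htkl Htkt]
  rw [hbr'', Hsls]
  have hqq : q * q⁻¹ = 1 := mul_inv_cancel₀ hq0
  have hvv : ν * ν⁻¹ = 1 := mul_inv_cancel₀ hν
  have hDD : (q - q⁻¹)⁻¹ * (q - q⁻¹) = 1 := inv_mul_cancel₀ hδ
  match_scalars
  · ring
  · ring
  · ring
  · ring
  · ring
  · ring
  · linear_combination (((-3) : ℂ) * ν * (q - q⁻¹)⁻¹ * u₁ ^ 2 * u₂ ^ 2 * u₃ ^ 2 + (3 : ℂ) * ν * (q - q⁻¹)⁻¹ * u₁ ^ 2 * u₂ ^ 3 * u₃ + (3 : ℂ) * ν * (q - q⁻¹)⁻¹ * u₁ ^ 3 * u₂ * u₃ ^ 2 + ((-3) : ℂ) * ν * (q - q⁻¹)⁻¹ * u₁ ^ 3 * u₂ ^ 2 * u₃ + (2 : ℂ) * ν ^ 2 * u₁ ^ 2 * u₂ ^ 2 * u₃ ^ 2 + ((-2) : ℂ) * ν ^ 2 * u₁ ^ 2 * u₂ ^ 3 * u₃ + ((-2) : ℂ) * ν ^ 2 * u₁ ^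 3 * u₂ * u₃ ^ 2 + (2 : ℂ) * ν ^ 2 * u₁ ^ 3 * u₂ ^ 2 * u₃ + (3 : ℂ) * ν ^ 2 * ν⁻¹ * (q - q⁻¹)⁻¹ * u₁ ^ 2 * u₂ ^ 2 * u₃ ^ 2 + ((-3) : ℂ) * ν ^ 2 * ν⁻¹ * (q - q⁻¹)⁻¹ * u₁ ^ 2 * u₂ ^ 3 * u₃ + ((-3) : ℂ) * ν ^ 2 * ν⁻¹ * (q - q⁻¹)⁻¹ * u₁ ^ 3 * u₂ * u₃ ^ 2 + (3 : ℂ) * ν ^ 2 * ν⁻¹ * (q - q⁻¹)⁻¹ * u₁ ^ 3 * u₂ ^ 2 * u₃ + ((-2) : ℂ) * ν ^ 3 * ν⁻¹ * u₁ ^ 2 * u₂ ^ 2 * u₃ ^ 2 + (2 : ℂ) * ν ^ 3 * ν⁻¹ * u₁ ^ 2 * u₂ ^ 3 * u₃ + (2 : ℂ) * ν ^ 3 * ν⁻¹ * u₁ ^ 3 * u₂ * u₃ ^ 2 + ((-2) : ℂ) * ν ^ 3 * ν⁻¹ * u₁ ^ 3 * u₂ ^ 3 + ((-2) : ℂ)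 * ν ^ 3 * ν⁻¹ * u₁ ^ 4 * u₂ * u₃ + (2 : ℂ) * ν ^ 3 * ν⁻¹ * u₁ ^ 4 * u₂ ^ 2 + ((-2) : ℂ) * ν ^ 4 * u₁ ^ 3 * u₂ ^ 2 * u₃ + (2 : ℂ) * ν ^ 4 * u₁ ^ 3 * u₂ ^ 3 + (2 : ℂ) * ν ^ 4 * u₁ ^ 4 * u₂ * u₃ + ((-2) : ℂ) * ν ^ 4 * u₁ ^ 4 * u₂ ^ 2 + ((-1) : ℂ) * q⁻¹ * ν * u₁ * u₂ ^ 2 * u₃ ^ 3 + q⁻¹ * ν * u₁ * u₂ ^ 3 * u₃ ^ 2 + q⁻¹ * ν * u₁ ^ 2 * u₂ * u₃ ^ 3 + ((-1) : ℂ) * q⁻¹ * ν * u₁ ^ 2 * u₂ ^ 2 * u₃ ^ 2 + ((-1) : ℂ) * q⁻¹ * ν ^ 2 * (q - q⁻¹)⁻¹ * u₁ ^ 3 * u₂ ^ 2 * u₃ + q⁻¹ * ν ^ 2 * (q - q⁻¹)⁻¹ * u₁ ^ 3 * u₂ ^ 3 + q⁻¹ * ν ^ 2 * (q - q⁻¹)⁻¹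 * u₁ ^ 4 * u₂ * u₃ + ((-1) : ℂ) * q⁻¹ * ν ^ 2 * (q - q⁻¹)⁻¹ * u₁ ^ 4 * u₂ ^ 2 + q⁻¹ * ν ^ 2 * ν⁻¹ * u₁ * u₂ ^ 2 * u₃ ^ 3 + ((-1) : ℂ) * q⁻¹ * ν ^ 2 * ν⁻¹ * u₁ * u₂ ^ 3 * u₃ ^ 2 + ((-1) : ℂ) * q⁻¹ * ν ^ 2 * ν⁻¹ * u₁ ^ 2 * u₂ * u₃ ^ 3 + q⁻¹ * ν ^ 2 * ν⁻¹ * u₁ ^ 2 * u₂ ^ 3 * u₃ + q⁻¹ * ν ^ 2 * ν⁻¹ * u₁ ^ 3 * u₂ * u₃ ^ 2 + ((-1) : ℂ) * q⁻¹ * ν ^ 2 * ν⁻¹ * u₁ ^ 3 * u₂ ^ 2 * u₃ + q⁻¹ * ν ^ 3 * u₁ ^ 2 * u₂ ^ 2 * u₃ ^ 2 + ((-1) : ℂ) * q⁻¹ * ν ^ 3 * u₁ ^ 2 * u₂ ^ 3 * u₃ + ((-1) : ℂ) * q⁻¹ * ν ^ 3 * u₁ ^ 3 * u₂ * u₃ ^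 2 + q⁻¹ * ν ^ 3 * u₁ ^ 3 * u₂ ^ 2 * u₃ + (3 : ℂ) * q⁻¹ * ν ^ 3 * ν⁻¹ * (q - q⁻¹)⁻¹ * u₁ ^ 3 * u₂ ^ 2 * u₃ + ((-3) : ℂ) * q⁻¹ * ν ^ 3 * ν⁻¹ * (q - q⁻¹)⁻¹ * u₁ ^ 3 * u₂ ^ 3 + ((-3) : ℂ) * q⁻¹ * ν ^ 3 * ν⁻¹ * (q - q⁻¹)⁻¹ * u₁ ^ 4 * u₂ * u₃ + (3 : ℂ) * q⁻¹ * ν ^ 3 * ν⁻¹ * (q - q⁻¹)⁻¹ * u₁ ^ 4 * u₂ ^ 2 + ((-2) : ℂ) * q⁻¹ * ν ^ 4 * (q - q⁻¹)⁻¹ * u₁ ^ 3 * u₂ ^ 2 * u₃ + (2 : ℂ) * q⁻¹ * ν ^ 4 * (q - q⁻¹)⁻¹ * u₁ ^ 3 * u₂ ^ 3 + (2 : ℂ) * q⁻¹ * ν ^ 4 * (q - q⁻¹)⁻¹ * u₁ ^ 4 * u₂ * u₃ + ((-2) : ℂ) * q⁻¹ * ν ^ 4 * (q - q⁻¹)⁻¹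 * u₁ ^ 4 * u₂ ^ 2 + ((-1) : ℂ) * q⁻¹ ^ 2 * ν ^ 2 * u₁ ^ 2 * u₂ ^ 2 * u₃ ^ 2 + q⁻¹ ^ 2 * ν ^ 2 * u₁ ^ 2 * u₂ ^ 3 * u₃ + q⁻¹ ^ 2 * ν ^ 2 * u₁ ^ 3 * u₂ * u₃ ^ 2 + ((-1) : ℂ) * q⁻¹ ^ 2 * ν ^ 2 * u₁ ^ 3 * u₂ ^ 2 * u₃ + ((-1) : ℂ) * q⁻¹ ^ 2 * ν ^ 2 * ν⁻¹ * (q - q⁻¹)⁻¹ * u₁ ^ 2 * u₂ ^ 2 * u₃ ^ 2 + q⁻¹ ^ 2 * ν ^ 2 * ν⁻¹ * (q - q⁻¹)⁻¹ * u₁ ^ 2 * u₂ ^ 3 * u₃ + q⁻¹ ^ 2 * ν ^ 2 * ν⁻¹ * (q - q⁻¹)⁻¹ * u₁ ^ 3 * u₂ * u₃ ^ 2 + ((-1) : ℂ) * q⁻¹ ^ 2 * ν ^ 2 * ν⁻¹ * (q - q⁻¹)⁻¹ * u₁ ^ 3 * u₂ ^ 2 * u₃ + q⁻¹ ^ 2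 * ν ^ 3 * (q - q⁻¹)⁻¹ * u₁ ^ 2 * u₂ ^ 2 * u₃ ^ 2 + ((-1) : ℂ) * q⁻¹ ^ 2 * ν ^ 3 * (q - q⁻¹)⁻¹ * u₁ ^ 2 * u₂ ^ 3 * u₃ + ((-1) : ℂ) * q⁻¹ ^ 2 * ν ^ 3 * (q - q⁻¹)⁻¹ * u₁ ^ 3 * u₂ * u₃ ^ 2 + q⁻¹ ^ 2 * ν ^ 3 * (q - q⁻¹)⁻¹ * u₁ ^ 3 * u₂ ^ 2 * u₃ + (2 : ℂ) * q * ν * u₁ * u₂ ^ 2 * u₃ ^ 3 + ((-2) : ℂ) * q * ν * u₁ * u₂ ^ 3 * u₃ ^ 2 + ((-2) : ℂ) * q * ν * u₁ ^ 2 * u₂ * u₃ ^ 3 + (2 : ℂ) * q * ν * u₁ ^ 2 * u₂ ^ 2 * u₃ ^ 2 + q * ν ^ 2 * (q - q⁻¹)⁻¹ * u₁ ^ 3 * u₂ ^ 2 * u₃ + ((-1) : ℂ) * q * ν ^ 2 * (q - q⁻¹)⁻¹ * u₁ ^ 3 * u₂ ^ 3 + ((-1) : ℂ) * q * ν ^ 2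 * (q - q⁻¹)⁻¹ * u₁ ^ 4 * u₂ * u₃ + q * ν ^ 2 * (q - q⁻¹)⁻¹ * u₁ ^ 4 * u₂ ^ 2 + ((-2) : ℂ) * q * ν ^ 2 * ν⁻¹ * u₁ * u₂ ^ 2 * u₃ ^ 3 + (2 : ℂ) * q * ν ^ 2 * ν⁻¹ * u₁ * u₂ ^ 3 * u₃ ^ 2 + (2 : ℂ) * q * ν ^ 2 * ν⁻¹ * u₁ ^ 2 * u₂ * u₃ ^ 3 + ((-2) : ℂ) * q * ν ^ 2 * ν⁻¹ * u₁ ^ 2 * u₂ ^ 3 * u₃ + ((-2) : ℂ) * q * ν ^ 2 * ν⁻¹ * u₁ ^ 3 * u₂ * u₃ ^ 2 + (2 : ℂ) * q * ν ^ 2 * ν⁻¹ * u₁ ^ 3 * u₂ ^ 2 * u₃ + ((-2) : ℂ) * q * ν ^ 3 * u₁ ^ 2 * u₂ ^ 2 * u₃ ^ 2 + (2 : ℂ) * q * ν ^ 3 * u₁ ^ 2 * u₂ ^ 3 * u₃ + (2 : ℂ) * q * ν ^ 3 * u₁ ^ 3 * u₂ * u₃ ^ 2 + ((-2) : ℂ)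 * q * ν ^ 3 * u₁ ^ 3 * u₂ ^ 2 * u₃ + ((-3) : ℂ) * q * ν ^ 3 * ν⁻¹ * (q - q⁻¹)⁻¹ * u₁ ^ 3 * u₂ ^ 2 * u₃ + (3 : ℂ) * q * ν ^ 3 * ν⁻¹ * (q - q⁻¹)⁻¹ * u₁ ^ 3 * u₂ ^ 3 + (3 : ℂ) * q * ν ^ 3 * ν⁻¹ * (q - q⁻¹)⁻¹ * u₁ ^ 4 * u₂ * u₃ + ((-3) : ℂ) * q * ν ^ 3 * ν⁻¹ * (q - q⁻¹)⁻¹ * u₁ ^ 4 * u₂ ^ 2 + (2 : ℂ) * q * ν ^ 4 * (q - q⁻¹)⁻¹ * u₁ ^ 3 * u₂ ^ 2 * u₃ + ((-2) : ℂ) * q * ν ^ 4 * (q - q⁻¹)⁻¹ * u₁ ^ 3 * u₂ ^ 3 + ((-2) : ℂ) * q * ν ^ 4 * (q - q⁻¹)⁻¹ * u₁ ^ 4 * u₂ * u₃ + (2 : ℂ) * q * ν ^ 4 * (q - q⁻¹)⁻¹ * u₁ ^ 4 * u₂ ^ 2 + (2 : ℂ) * q * q⁻¹ * ν ^ 2 *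 u₁ ^ 2 * u₂ ^ 2 * u₃ ^ 2 + ((-2) : ℂ) * q * q⁻¹ * ν ^ 2 * u₁ ^ 2 * u₂ ^ 3 * u₃ + ((-2) : ℂ) * q * q⁻¹ * ν ^ 2 * u₁ ^ 3 * u₂ * u₃ ^ 2 + (2 : ℂ) * q * q⁻¹ * ν ^ 2 * u₁ ^ 3 * u₂ ^ 2 * u₃ + (3 : ℂ) * q * q⁻¹ * ν ^ 2 * ν⁻¹ * (q - q⁻¹)⁻¹ * u₁ ^ 2 * u₂ ^ 2 * u₃ ^ 2 + ((-3) : ℂ) * q * q⁻¹ * ν ^ 2 * ν⁻¹ * (q - q⁻¹)⁻¹ * u₁ ^ 2 * u₂ ^ 3 * u₃ + ((-3) : ℂ) * q * q⁻¹ * ν ^ 2 * ν⁻¹ * (q - q⁻¹)⁻¹ * u₁ ^ 3 * u₂ * u₃ ^ 2 + (3 : ℂ) * q * q⁻¹ * ν ^ 2 * ν⁻¹ * (q - q⁻¹)⁻¹ * u₁ ^ 3 * u₂ ^ 2 * u₃ + ((-3) : ℂ) * q * q⁻¹ * ν ^ 3 * (q - q⁻¹)⁻¹ * u₁ ^ 2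 * u₂ ^ 2 * u₃ ^ 2 + (3 : ℂ) * q * q⁻¹ * ν ^ 3 * (q - q⁻¹)⁻¹ * u₁ ^ 2 * u₂ ^ 3 * u₃ + (3 : ℂ) * q * q⁻¹ * ν ^ 3 * (q - q⁻¹)⁻¹ * u₁ ^ 3 * u₂ * u₃ ^ 2 + ((-3) : ℂ) * q * q⁻¹ * ν ^ 3 * (q - q⁻¹)⁻¹ * u₁ ^ 3 * u₂ ^ 2 * u₃ + ((-1) : ℂ) * q * q⁻¹ ^ 2 * ν * u₁ * u₂ ^ 2 * u₃ ^ 3 + q * q⁻¹ ^ 2 * ν * u₁ * u₂ ^ 3 * u₃ ^ 2 + q * q⁻¹ ^ 2 * ν * u₁ ^ 2 * u₂ * u₃ ^ 3 + ((-1) : ℂ) * q * q⁻¹ ^ 2 * ν * u₁ ^ 2 * u₂ ^ 2 * u₃ ^ 2 + q ^ 2 * ν * (q - q⁻¹)⁻¹ * u₁ ^ 2 * u₂ ^ 2 * u₃ ^ 2 + ((-1) : ℂ) * q ^ 2 * ν * (q - q⁻¹)⁻¹ * u₁ ^ 2 * u₂ ^ 3 * u₃ + ((-1) : ℂ) * q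 ^ 2 * ν * (q - q⁻¹)⁻¹ * u₁ ^ 3 * u₂ * u₃ ^ 2 + q ^ 2 * ν * (q - q⁻¹)⁻¹ * u₁ ^ 3 * u₂ ^ 2 * u₃ + ((-1) : ℂ) * q ^ 2 * ν ^ 2 * u₁ ^ 2 * u₂ ^ 2 * u₃ ^ 2 + q ^ 2 * ν ^ 2 * u₁ ^ 2 * u₂ ^ 3 * u₃ + q ^ 2 * ν ^ 2 * u₁ ^ 3 * u₂ * u₃ ^ 2 + ((-1) : ℂ) * q ^ 2 * ν ^ 2 * u₁ ^ 3 * u₂ ^ 2 * u₃ + ((-3) : ℂ) * q ^ 2 * ν ^ 2 * ν⁻¹ * (q - q⁻¹)⁻¹ * u₁ ^ 2 * u₂ ^ 2 * u₃ ^ 2 + (3 : ℂ) * q ^ 2 * ν ^ 2 * ν⁻¹ * (q - q⁻¹)⁻¹ * u₁ ^ 2 * u₂ ^ 3 * u₃ + (3 : ℂ) * q ^ 2 * ν ^ 2 * ν⁻¹ * (q - q⁻¹)⁻¹ * u₁ ^ 3 * u₂ * u₃ ^ 2 + ((-3) : ℂ) * q ^ 2 * ν ^ 2 * ν⁻¹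 * (q - q⁻¹)⁻¹ * u₁ ^ 3 * u₂ ^ 2 * u₃ + (2 : ℂ) * q ^ 2 * ν ^ 3 * (q - q⁻¹)⁻¹ * u₁ ^ 2 * u₂ ^ 2 * u₃ ^ 2 + ((-2) : ℂ) * q ^ 2 * ν ^ 3 * (q - q⁻¹)⁻¹ * u₁ ^ 2 * u₂ ^ 3 * u₃ + ((-2) : ℂ) * q ^ 2 * ν ^ 3 * (q - q⁻¹)⁻¹ * u₁ ^ 3 * u₂ * u₃ ^ 2 + (2 : ℂ) * q ^ 2 * ν ^ 3 * (q - q⁻¹)⁻¹ * u₁ ^ 3 * u₂ ^ 2 * u₃ + (2 : ℂ) * q ^ 2 * q⁻¹ * ν * u₁ * u₂ ^ 2 * u₃ ^ 3 + ((-2) : ℂ) * q ^ 2 * q⁻¹ * ν * u₁ * u₂ ^ 3 * u₃ ^ 2 + ((-2) : ℂ) * q ^ 2 * q⁻¹ * ν * u₁ ^ 2 * u₂ * u₃ ^ 3 + (2 : ℂ) * q ^ 2 * q⁻¹ * ν * u₁ ^ 2 * u₂ ^ 2 * u₃ ^ 2 + ((-1) : ℂ) * q ^ 3 * ν * u₁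 * u₂ ^ 2 * u₃ ^ 3 + q ^ 3 * ν * u₁ * u₂ ^ 3 * u₃ ^ 2 + q ^ 3 * ν * u₁ ^ 2 * u₂ * u₃ ^ 3 + ((-1) : ℂ) * q ^ 3 * ν * u₁ ^ 2 * u₂ ^ 2 * u₃ ^ 2) * hqq + ((3 : ℂ) * ν * (q - q⁻¹)⁻¹ * u₁ ^ 2 * u₂ ^ 2 * u₃ ^ 2 + ((-3) : ℂ) * ν * (q - q⁻¹)⁻¹ * u₁ ^ 2 * u₂ ^ 3 * u₃ + ((-3) : ℂ) * ν * (q - q⁻¹)⁻¹ * u₁ ^ 3 * u₂ * u₃ ^ 2 + (3 : ℂ) * ν * (q - q⁻¹)⁻¹ * u₁ ^ 3 * u₂ ^ 2 * u₃ + ((-2) : ℂ) * ν ^ 2 * u₁ ^ 2 * u₂ ^ 2 * u₃ ^ 2 + (2 : ℂ) * ν ^ 2 * u₁ ^ 2 * u₂ ^ 3 * u₃ + (2 : ℂ) * ν ^ 2 * u₁ ^ 3 * u₂ * u₃ ^ 2 + ((-2) : ℂ) * ν ^ 2 * u₁ ^ 3 * u₂ ^ 3 + ((-2) : ℂ) *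 ν ^ 2 * u₁ ^ 4 * u₂ * u₃ + (2 : ℂ) * ν ^ 2 * u₁ ^ 4 * u₂ ^ 2 + q⁻¹ * ν * u₁ * u₂ ^ 2 * u₃ ^ 3 + ((-1) : ℂ) * q⁻¹ * ν * u₁ * u₂ ^ 3 * u₃ ^ 2 + ((-1) : ℂ) * q⁻¹ * ν * u₁ ^ 2 * u₂ * u₃ ^ 3 + q⁻¹ * ν * u₁ ^ 2 * u₂ ^ 3 * u₃ + q⁻¹ * ν * u₁ ^ 3 * u₂ * u₃ ^ 2 + ((-1) : ℂ) * q⁻¹ * ν * u₁ ^ 3 * u₂ ^ 2 * u₃ + (3 : ℂ) * q⁻¹ * ν ^ 2 * (q - q⁻¹)⁻¹ * u₁ ^ 3 * u₂ ^ 2 * u₃ + ((-3) : ℂ) * q⁻¹ * ν ^ 2 * (q - q⁻¹)⁻¹ * u₁ ^ 3 * u₂ ^ 3 + ((-3) : ℂ) * q⁻¹ * ν ^ 2 * (q - q⁻¹)⁻¹ * u₁ ^ 4 * u₂ * u₃ + (3 : ℂ) * q⁻¹ * ν ^ 2 * (q - q⁻¹)⁻¹ * u₁ ^ 4 * u₂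 ^ 2 + ((-1) : ℂ) * q⁻¹ ^ 2 * ν * (q - q⁻¹)⁻¹ * u₁ ^ 2 * u₂ ^ 2 * u₃ ^ 2 + q⁻¹ ^ 2 * ν * (q - q⁻¹)⁻¹ * u₁ ^ 2 * u₂ ^ 3 * u₃ + q⁻¹ ^ 2 * ν * (q - q⁻¹)⁻¹ * u₁ ^ 3 * u₂ * u₃ ^ 2 + ((-1) : ℂ) * q⁻¹ ^ 2 * ν * (q - q⁻¹)⁻¹ * u₁ ^ 3 * u₂ ^ 2 * u₃ + q⁻¹ ^ 2 * ν ^ 2 * u₁ ^ 2 * u₂ ^ 2 * u₃ ^ 2 + ((-1) : ℂ) * q⁻¹ ^ 2 * ν ^ 2 * u₁ ^ 2 * u₂ ^ 3 * u₃ + ((-1) : ℂ) * q⁻¹ ^ 2 * ν ^ 2 * u₁ ^ 3 * u₂ * u₃ ^ 2 + q⁻¹ ^ 2 * ν ^ 2 * u₁ ^ 3 * u₂ ^ 3 + q⁻¹ ^ 2 * ν ^ 2 * u₁ ^ 4 * u₂ * u₃ + ((-1) : ℂ) * q⁻¹ ^ 2 * ν ^ 2 * u₁ ^ 4 * u₂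 ^ 2 + ((-1) : ℂ) * q⁻¹ ^ 3 * ν ^ 2 * (q - q⁻¹)⁻¹ * u₁ ^ 3 * u₂ ^ 2 * u₃ + q⁻¹ ^ 3 * ν ^ 2 * (q - q⁻¹)⁻¹ * u₁ ^ 3 * u₂ ^ 3 + q⁻¹ ^ 3 * ν ^ 2 * (q - q⁻¹)⁻¹ * u₁ ^ 4 * u₂ * u₃ + ((-1) : ℂ) * q⁻¹ ^ 3 * ν ^ 2 * (q - q⁻¹)⁻¹ * u₁ ^ 4 * u₂ ^ 2 + ((-2) : ℂ) * q * ν * u₁ * u₂ ^ 2 * u₃ ^ 3 + (2 : ℂ) * q * ν * u₁ * u₂ ^ 3 * u₃ ^ 2 + (2 : ℂ) * q * ν * u₁ ^ 2 * u₂ * u₃ ^ 3 + ((-2) : ℂ) * q * ν * u₁ ^ 2 * u₂ ^ 3 * u₃ + ((-2) : ℂ) * q * ν * u₁ ^ 3 * u₂ * u₃ ^ 2 + (2 : ℂ) * q * ν * u₁ ^ 3 * u₂ ^ 2 * u₃ + ((-3) : ℂ) * q * ν ^ 2 * (q - q⁻¹)⁻¹ * u₁ ^ 3 * u₂ ^ 2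 * u₃ + (3 : ℂ) * q * ν ^ 2 * (q - q⁻¹)⁻¹ * u₁ ^ 3 * u₂ ^ 3 + (3 : ℂ) * q * ν ^ 2 * (q - q⁻¹)⁻¹ * u₁ ^ 4 * u₂ * u₃ + ((-3) : ℂ) * q * ν ^ 2 * (q - q⁻¹)⁻¹ * u₁ ^ 4 * u₂ ^ 2 + ((-3) : ℂ) * q ^ 2 * ν * (q - q⁻¹)⁻¹ * u₁ ^ 2 * u₂ ^ 2 * u₃ ^ 2 + (3 : ℂ) * q ^ 2 * ν * (q - q⁻¹)⁻¹ * u₁ ^ 2 * u₂ ^ 3 * u₃ + (3 : ℂ) * q ^ 2 * ν * (q - q⁻¹)⁻¹ * u₁ ^ 3 * u₂ * u₃ ^ 2 + ((-3) : ℂ) * q ^ 2 * ν * (q - q⁻¹)⁻¹ * u₁ ^ 3 * u₂ ^ 2 * u₃ + q ^ 2 * ν ^ 2 * u₁ ^ 2 * u₂ ^ 2 * u₃ ^ 2 + ((-1) : ℂ) * q ^ 2 * ν ^ 2 * u₁ ^ 2 * u₂ ^ 3 * u₃ + ((-1) : ℂ) * q ^ 2 * ν ^ 2 * u₁ ^ 3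 * u₂ * u₃ ^ 2 + q ^ 2 * ν ^ 2 * u₁ ^ 3 * u₂ ^ 3 + q ^ 2 * ν ^ 2 * u₁ ^ 4 * u₂ * u₃ + ((-1) : ℂ) * q ^ 2 * ν ^ 2 * u₁ ^ 4 * u₂ ^ 2 + q ^ 3 * ν * u₁ * u₂ ^ 2 * u₃ ^ 3 + ((-1) : ℂ) * q ^ 3 * ν * u₁ * u₂ ^ 3 * u₃ ^ 2 + ((-1) : ℂ) * q ^ 3 * ν * u₁ ^ 2 * u₂ * u₃ ^ 3 + q ^ 3 * ν * u₁ ^ 2 * u₂ ^ 3 * u₃ + q ^ 3 * ν * u₁ ^ 3 * u₂ * u₃ ^ 2 + ((-1) : ℂ) * q ^ 3 * ν * u₁ ^ 3 * u₂ ^ 2 * u₃ + q ^ 3 * ν ^ 2 * (q - q⁻¹)⁻¹ * u₁ ^ 3 * u₂ ^ 2 * u₃ + ((-1) : ℂ) * q ^ 3 * ν ^ 2 * (q - q⁻¹)⁻¹ * u₁ ^ 3 * u₂ ^ 3 + ((-1) : ℂ) * q ^ 3 * ν ^ 2 * (q - q⁻¹)⁻¹ * u₁ ^ 4 * u₂ *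 u₃ + q ^ 3 * ν ^ 2 * (q - q⁻¹)⁻¹ * u₁ ^ 4 * u₂ ^ 2 + q ^ 4 * ν * (q - q⁻¹)⁻¹ * u₁ ^ 2 * u₂ ^ 2 * u₃ ^ 2 + ((-1) : ℂ) * q ^ 4 * ν * (q - q⁻¹)⁻¹ * u₁ ^ 2 * u₂ ^ 3 * u₃ + ((-1) : ℂ) * q ^ 4 * ν * (q - q⁻¹)⁻¹ * u₁ ^ 3 * u₂ * u₃ ^ 2 + q ^ 4 * ν * (q - q⁻¹)⁻¹ * u₁ ^ 3 * u₂ ^ 2 * u₃) * hvv + (((-2) : ℂ) * ν ^ 2 * u₁ ^ 3 * u₂ ^ 2 * u₃ + (2 : ℂ) * ν ^ 2 * u₁ ^ 3 * u₂ ^ 3 + (2 : ℂ) * ν ^ 2 * u₁ ^ 4 * u₂ * u₃ + ((-2) : ℂ) * ν ^ 2 * u₁ ^ 4 * u₂ ^ 2 + (2 : ℂ) * ν ^ 4 * u₁ ^ 3 * u₂ ^ 2 * u₃ + ((-2) : ℂ) * ν ^ 4 * u₁ ^ 3 * u₂ ^ 3 + ((-2) : ℂ) * ν ^ 4 * u₁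 ^ 4 * u₂ * u₃ + (2 : ℂ) * ν ^ 4 * u₁ ^ 4 * u₂ ^ 2 + q⁻¹ * ν * u₁ ^ 2 * u₂ ^ 2 * u₃ ^ 2 + ((-1) : ℂ) * q⁻¹ * ν * u₁ ^ 2 * u₂ ^ 3 * u₃ + ((-1) : ℂ) * q⁻¹ * ν * u₁ ^ 3 * u₂ * u₃ ^ 2 + q⁻¹ * ν * u₁ ^ 3 * u₂ ^ 2 * u₃ + ((-1) : ℂ) * q⁻¹ * ν ^ 3 * u₁ ^ 2 * u₂ ^ 2 * u₃ ^ 2 + q⁻¹ * ν ^ 3 * u₁ ^ 2 * u₂ ^ 3 * u₃ + q⁻¹ * ν ^ 3 * u₁ ^ 3 * u₂ * u₃ ^ 2 + ((-1) : ℂ) * q⁻¹ * ν ^ 3 * u₁ ^ 3 * u₂ ^ 2 * u₃ + q⁻¹ ^ 2 * ν ^ 2 * u₁ ^ 3 * u₂ ^ 2 * u₃ + ((-1) : ℂ) * q⁻¹ ^ 2 * ν ^ 2 * u₁ ^ 3 * u₂ ^ 3 + ((-1) : ℂ) * q⁻¹ ^ 2 * ν ^ 2 * u₁ ^ 4 *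 u₂ * u₃ + q⁻¹ ^ 2 * ν ^ 2 * u₁ ^ 4 * u₂ ^ 2 + ((-1) : ℂ) * q⁻¹ ^ 2 * ν ^ 4 * u₁ ^ 3 * u₂ ^ 2 * u₃ + q⁻¹ ^ 2 * ν ^ 4 * u₁ ^ 3 * u₂ ^ 3 + q⁻¹ ^ 2 * ν ^ 4 * u₁ ^ 4 * u₂ * u₃ + ((-1) : ℂ) * q⁻¹ ^ 2 * ν ^ 4 * u₁ ^ 4 * u₂ ^ 2 + ((-2) : ℂ) * q * ν * u₁ ^ 2 * u₂ ^ 2 * u₃ ^ 2 + (2 : ℂ) * q * ν * u₁ ^ 2 * u₂ ^ 3 * u₃ + (2 : ℂ) * q * ν * u₁ ^ 3 * u₂ * u₃ ^ 2 + ((-2) : ℂ) * q * ν * u₁ ^ 3 * u₂ ^ 2 * u₃ + (2 : ℂ) * q * ν ^ 3 * u₁ ^ 2 * u₂ ^ 2 * u₃ ^ 2 + ((-2) : ℂ) * q * ν ^ 3 * u₁ ^ 2 * u₂ ^ 3 * u₃ + ((-2) : ℂ) * q * ν ^ 3 * u₁ ^ 3 * u₂ * u₃ ^ 2 + (2 :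 ℂ) * q * ν ^ 3 * u₁ ^ 3 * u₂ ^ 2 * u₃ + q ^ 2 * ν ^ 2 * u₁ ^ 3 * u₂ ^ 2 * u₃ + ((-1) : ℂ) * q ^ 2 * ν ^ 2 * u₁ ^ 3 * u₂ ^ 3 + ((-1) : ℂ) * q ^ 2 * ν ^ 2 * u₁ ^ 4 * u₂ * u₃ + q ^ 2 * ν ^ 2 * u₁ ^ 4 * u₂ ^ 2 + ((-1) : ℂ) * q ^ 2 * ν ^ 4 * u₁ ^ 3 * u₂ ^ 2 * u₃ + q ^ 2 * ν ^ 4 * u₁ ^ 3 * u₂ ^ 3 + q ^ 2 * ν ^ 4 * u₁ ^ 4 * u₂ * u₃ + ((-1) : ℂ) * q ^ 2 * ν ^ 4 * u₁ ^ 4 * u₂ ^ 2 + q ^ 3 * ν * u₁ ^ 2 * u₂ ^ 2 * u₃ ^ 2 + ((-1) : ℂ) * q ^ 3 * ν * u₁ ^ 2 * u₂ ^ 3 * u₃ + ((-1) : ℂ) * q ^ 3 * ν * u₁ ^ 3 * u₂ * u₃ ^ 2 + q ^ 3 * ν * u₁ ^ 3 * u₂ ^ 2 * u₃ + ((-1)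 : ℂ) * q ^ 3 * ν ^ 3 * u₁ ^ 2 * u₂ ^ 2 * u₃ ^ 2 + q ^ 3 * ν ^ 3 * u₁ ^ 2 * u₂ ^ 3 * u₃ + q ^ 3 * ν ^ 3 * u₁ ^ 3 * u₂ * u₃ ^ 2 + ((-1) : ℂ) * q ^ 3 * ν ^ 3 * u₁ ^ 3 * u₂ ^ 2 * u₃) * hDD
  · linear_combination ((3 : ℂ) * ν * (q - q⁻¹)⁻¹ * u₁ ^ 2 * u₂ ^ 2 * u₃ ^ 2 + ((-3) : ℂ) * ν * (q - q⁻¹)⁻¹ * u₁ ^ 2 * u₂ ^ 3 * u₃ + ((-3) : ℂ) * ν * (q - q⁻¹)⁻¹ * u₁ ^ 3 * u₂ * u₃ ^ 2 + (3 : ℂ) * ν * (q - q⁻¹)⁻¹ * u₁ ^ 3 * u₂ ^ 2 * u₃ + ((-2) : ℂ) * ν ^ 2 * u₁ ^ 2 * u₂ ^ 2 * u₃ ^ 2 + (2 : ℂ) * ν ^ 2 * u₁ ^ 2 * u₂ ^ 3 * u₃ + (2 : ℂ) * ν ^ 2 * u₁ ^ 3 * u₂ * u₃ ^ 2 + ((-2)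 : ℂ) * ν ^ 2 * u₁ ^ 3 * u₂ ^ 2 * u₃ + ((-3) : ℂ) * ν ^ 2 * ν⁻¹ * (q - q⁻¹)⁻¹ * u₁ ^ 2 * u₂ ^ 2 * u₃ ^ 2 + (3 : ℂ) * ν ^ 2 * ν⁻¹ * (q - q⁻¹)⁻¹ * u₁ ^ 2 * u₂ ^ 3 * u₃ + (3 : ℂ) * ν ^ 2 * ν⁻¹ * (q - q⁻¹)⁻¹ * u₁ ^ 3 * u₂ * u₃ ^ 2 + ((-3) : ℂ) * ν ^ 2 * ν⁻¹ * (q - q⁻¹)⁻¹ * u₁ ^ 3 * u₂ ^ 2 * u₃ + (2 : ℂ) * ν ^ 3 * ν⁻¹ * u₁ ^ 2 * u₂ ^ 2 * u₃ ^ 2 + ((-2) : ℂ) * ν ^ 3 * ν⁻¹ * u₁ ^ 2 * u₂ ^ 3 * u₃ + ((-2) : ℂ) * ν ^ 3 * ν⁻¹ * u₁ ^ 3 * u₂ * u₃ ^ 2 + (2 : ℂ) * ν ^ 3 * ν⁻¹ * u₁ ^ 3 * u₂ ^ 3 + (2 : ℂ) * ν ^ 3 * ν⁻¹ * u₁ ^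 4 * u₂ * u₃ + ((-2) : ℂ) * ν ^ 3 * ν⁻¹ * u₁ ^ 4 * u₂ ^ 2 + (2 : ℂ) * ν ^ 4 * u₁ ^ 3 * u₂ ^ 2 * u₃ + ((-2) : ℂ) * ν ^ 4 * u₁ ^ 3 * u₂ ^ 3 + ((-2) : ℂ) * ν ^ 4 * u₁ ^ 4 * u₂ * u₃ + (2 : ℂ) * ν ^ 4 * u₁ ^ 4 * u₂ ^ 2 + q⁻¹ * ν * u₁ * u₂ ^ 2 * u₃ ^ 3 + ((-1) : ℂ) * q⁻¹ * ν * u₁ * u₂ ^ 3 * u₃ ^ 2 + ((-1) : ℂ) * q⁻¹ * ν * u₁ ^ 2 * u₂ * u₃ ^ 3 + q⁻¹ * ν * u₁ ^ 2 * u₂ ^ 2 * u₃ ^ 2 + q⁻¹ * ν ^ 2 * (q - q⁻¹)⁻¹ * u₁ ^ 3 * u₂ ^ 2 * u₃ + ((-1) : ℂ) * q⁻¹ * ν ^ 2 * (q - q⁻¹)⁻¹ * u₁ ^ 3 * u₂ ^ 3 + ((-1) : ℂ) * q⁻¹ * ν ^ 2 * (q - q⁻¹)⁻¹ * u₁ ^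 4 * u₂ * u₃ + q⁻¹ * ν ^ 2 * (q - q⁻¹)⁻¹ * u₁ ^ 4 * u₂ ^ 2 + ((-1) : ℂ) * q⁻¹ * ν ^ 2 * ν⁻¹ * u₁ * u₂ ^ 2 * u₃ ^ 3 + q⁻¹ * ν ^ 2 * ν⁻¹ * u₁ * u₂ ^ 3 * u₃ ^ 2 + q⁻¹ * ν ^ 2 * ν⁻¹ * u₁ ^ 2 * u₂ * u₃ ^ 3 + ((-1) : ℂ) * q⁻¹ * ν ^ 2 * ν⁻¹ * u₁ ^ 2 * u₂ ^ 3 * u₃ + ((-1) : ℂ) * q⁻¹ * ν ^ 2 * ν⁻¹ * u₁ ^ 3 * u₂ * u₃ ^ 2 + q⁻¹ * ν ^ 2 * ν⁻¹ * u₁ ^ 3 * u₂ ^ 2 * u₃ + ((-1) : ℂ) * q⁻¹ * ν ^ 3 * u₁ ^ 2 * u₂ ^ 2 * u₃ ^ 2 + q⁻¹ * ν ^ 3 * u₁ ^ 2 * u₂ ^ 3 * u₃ + q⁻¹ * ν ^ 3 * u₁ ^ 3 * u₂ * u₃ ^ 2 + ((-1) : ℂ) * q⁻¹ * ν ^ 3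 * u₁ ^ 3 * u₂ ^ 2 * u₃ + ((-3) : ℂ) * q⁻¹ * ν ^ 3 * ν⁻¹ * (q - q⁻¹)⁻¹ * u₁ ^ 3 * u₂ ^ 2 * u₃ + (3 : ℂ) * q⁻¹ * ν ^ 3 * ν⁻¹ * (q - q⁻¹)⁻¹ * u₁ ^ 3 * u₂ ^ 3 + (3 : ℂ) * q⁻¹ * ν ^ 3 * ν⁻¹ * (q - q⁻¹)⁻¹ * u₁ ^ 4 * u₂ * u₃ + ((-3) : ℂ) * q⁻¹ * ν ^ 3 * ν⁻¹ * (q - q⁻¹)⁻¹ * u₁ ^ 4 * u₂ ^ 2 + (2 : ℂ) * q⁻¹ * ν ^ 4 * (q - q⁻¹)⁻¹ * u₁ ^ 3 * u₂ ^ 2 * u₃ + ((-2) : ℂ) * q⁻¹ * ν ^ 4 * (q - q⁻¹)⁻¹ * u₁ ^ 3 * u₂ ^ 3 + ((-2) : ℂ) * q⁻¹ * ν ^ 4 * (q - q⁻¹)⁻¹ * u₁ ^ 4 * u₂ * u₃ + (2 : ℂ) * q⁻¹ * ν ^ 4 * (q - q⁻¹)⁻¹ * u₁ ^ 4 * u₂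 ^ 2 + q⁻¹ ^ 2 * ν ^ 2 * u₁ ^ 2 * u₂ ^ 2 * u₃ ^ 2 + ((-1) : ℂ) * q⁻¹ ^ 2 * ν ^ 2 * u₁ ^ 2 * u₂ ^ 3 * u₃ + ((-1) : ℂ) * q⁻¹ ^ 2 * ν ^ 2 * u₁ ^ 3 * u₂ * u₃ ^ 2 + q⁻¹ ^ 2 * ν ^ 2 * u₁ ^ 3 * u₂ ^ 2 * u₃ + q⁻¹ ^ 2 * ν ^ 2 * ν⁻¹ * (q - q⁻¹)⁻¹ * u₁ ^ 2 * u₂ ^ 2 * u₃ ^ 2 + ((-1) : ℂ) * q⁻¹ ^ 2 * ν ^ 2 * ν⁻¹ * (q - q⁻¹)⁻¹ * u₁ ^ 2 * u₂ ^ 3 * u₃ + ((-1) : ℂ) * q⁻¹ ^ 2 * ν ^ 2 * ν⁻¹ * (q - q⁻¹)⁻¹ * u₁ ^ 3 * u₂ * u₃ ^ 2 + q⁻¹ ^ 2 * ν ^ 2 * ν⁻¹ * (q - q⁻¹)⁻¹ * u₁ ^ 3 * u₂ ^ 2 * u₃ + ((-1) : ℂ) * q⁻¹ ^ 2 * ν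 ^ 3 * (q - q⁻¹)⁻¹ * u₁ ^ 2 * u₂ ^ 2 * u₃ ^ 2 + q⁻¹ ^ 2 * ν ^ 3 * (q - q⁻¹)⁻¹ * u₁ ^ 2 * u₂ ^ 3 * u₃ + q⁻¹ ^ 2 * ν ^ 3 * (q - q⁻¹)⁻¹ * u₁ ^ 3 * u₂ * u₃ ^ 2 + ((-1) : ℂ) * q⁻¹ ^ 2 * ν ^ 3 * (q - q⁻¹)⁻¹ * u₁ ^ 3 * u₂ ^ 2 * u₃ + ((-2) : ℂ) * q * ν * u₁ * u₂ ^ 2 * u₃ ^ 3 + (2 : ℂ) * q * ν * u₁ * u₂ ^ 3 * u₃ ^ 2 + (2 : ℂ) * q * ν * u₁ ^ 2 * u₂ * u₃ ^ 3 + ((-2) : ℂ) * q * ν * u₁ ^ 2 * u₂ ^ 2 * u₃ ^ 2 + ((-1) : ℂ) * q * ν ^ 2 * (q - q⁻¹)⁻¹ * u₁ ^ 3 * u₂ ^ 2 * u₃ + q * ν ^ 2 * (q - q⁻¹)⁻¹ * u₁ ^ 3 * u₂ ^ 3 + q * ν ^ 2 * (q - q⁻¹)⁻¹ * u₁ ^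 4 * u₂ * u₃ + ((-1) : ℂ) * q * ν ^ 2 * (q - q⁻¹)⁻¹ * u₁ ^ 4 * u₂ ^ 2 + (2 : ℂ) * q * ν ^ 2 * ν⁻¹ * u₁ * u₂ ^ 2 * u₃ ^ 3 + ((-2) : ℂ) * q * ν ^ 2 * ν⁻¹ * u₁ * u₂ ^ 3 * u₃ ^ 2 + ((-2) : ℂ) * q * ν ^ 2 * ν⁻¹ * u₁ ^ 2 * u₂ * u₃ ^ 3 + (2 : ℂ) * q * ν ^ 2 * ν⁻¹ * u₁ ^ 2 * u₂ ^ 3 * u₃ + (2 : ℂ) * q * ν ^ 2 * ν⁻¹ * u₁ ^ 3 * u₂ * u₃ ^ 2 + ((-2) : ℂ) * q * ν ^ 2 * ν⁻¹ * u₁ ^ 3 * u₂ ^ 2 * u₃ + (2 : ℂ) * q * ν ^ 3 * u₁ ^ 2 * u₂ ^ 2 * u₃ ^ 2 + ((-2) : ℂ) * q * ν ^ 3 * u₁ ^ 2 * u₂ ^ 3 * u₃ + ((-2) : ℂ) * q * ν ^ 3 * u₁ ^ 3 * u₂ * u₃ ^ 2 + (2 : ℂ) * q * ν ^ 3 * u₁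 ^ 3 * u₂ ^ 2 * u₃ + (3 : ℂ) * q * ν ^ 3 * ν⁻¹ * (q - q⁻¹)⁻¹ * u₁ ^ 3 * u₂ ^ 2 * u₃ + ((-3) : ℂ) * q * ν ^ 3 * ν⁻¹ * (q - q⁻¹)⁻¹ * u₁ ^ 3 * u₂ ^ 3 + ((-3) : ℂ) * q * ν ^ 3 * ν⁻¹ * (q - q⁻¹)⁻¹ * u₁ ^ 4 * u₂ * u₃ + (3 : ℂ) * q * ν ^ 3 * ν⁻¹ * (q - q⁻¹)⁻¹ * u₁ ^ 4 * u₂ ^ 2 + ((-2) : ℂ) * q * ν ^ 4 * (q - q⁻¹)⁻¹ * u₁ ^ 3 * u₂ ^ 2 * u₃ + (2 : ℂ) * q * ν ^ 4 * (q - q⁻¹)⁻¹ * u₁ ^ 3 * u₂ ^ 3 + (2 : ℂ) * q * ν ^ 4 * (q - q⁻¹)⁻¹ * u₁ ^ 4 * u₂ * u₃ + ((-2) : ℂ) * q * ν ^ 4 * (q - q⁻¹)⁻¹ * u₁ ^ 4 * u₂ ^ 2 + ((-2) : ℂ) * q * q⁻¹ * ν ^ 2 * u₁ ^ 2 * u₂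 ^ 2 * u₃ ^ 2 + (2 : ℂ) * q * q⁻¹ * ν ^ 2 * u₁ ^ 2 * u₂ ^ 3 * u₃ + (2 : ℂ) * q * q⁻¹ * ν ^ 2 * u₁ ^ 3 * u₂ * u₃ ^ 2 + ((-2) : ℂ) * q * q⁻¹ * ν ^ 2 * u₁ ^ 3 * u₂ ^ 2 * u₃ + ((-3) : ℂ) * q * q⁻¹ * ν ^ 2 * ν⁻¹ * (q - q⁻¹)⁻¹ * u₁ ^ 2 * u₂ ^ 2 * u₃ ^ 2 + (3 : ℂ) * q * q⁻¹ * ν ^ 2 * ν⁻¹ * (q - q⁻¹)⁻¹ * u₁ ^ 2 * u₂ ^ 3 * u₃ + (3 : ℂ) * q * q⁻¹ * ν ^ 2 * ν⁻¹ * (q - q⁻¹)⁻¹ * u₁ ^ 3 * u₂ * u₃ ^ 2 + ((-3) : ℂ) * q * q⁻¹ * ν ^ 2 * ν⁻¹ * (q - q⁻¹)⁻¹ * u₁ ^ 3 * u₂ ^ 2 * u₃ + (3 : ℂ) * q * q⁻¹ * ν ^ 3 * (q - q⁻¹)⁻¹ * u₁ ^ 2 * u₂ ^ 2 * u₃ ^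 2 + ((-3) : ℂ) * q * q⁻¹ * ν ^ 3 * (q - q⁻¹)⁻¹ * u₁ ^ 2 * u₂ ^ 3 * u₃ + ((-3) : ℂ) * q * q⁻¹ * ν ^ 3 * (q - q⁻¹)⁻¹ * u₁ ^ 3 * u₂ * u₃ ^ 2 + (3 : ℂ) * q * q⁻¹ * ν ^ 3 * (q - q⁻¹)⁻¹ * u₁ ^ 3 * u₂ ^ 2 * u₃ + q * q⁻¹ ^ 2 * ν * u₁ * u₂ ^ 2 * u₃ ^ 3 + ((-1) : ℂ) * q * q⁻¹ ^ 2 * ν * u₁ * u₂ ^ 3 * u₃ ^ 2 + ((-1) : ℂ) * q * q⁻¹ ^ 2 * ν * u₁ ^ 2 * u₂ * u₃ ^ 3 + q * q⁻¹ ^ 2 * ν * u₁ ^ 2 * u₂ ^ 2 * u₃ ^ 2 + ((-1) : ℂ) * q ^ 2 * ν * (q - q⁻¹)⁻¹ * u₁ ^ 2 * u₂ ^ 2 * u₃ ^ 2 + q ^ 2 * ν * (q - q⁻¹)⁻¹ * u₁ ^ 2 * u₂ ^ 3 * u₃ + q ^ 2 * ν * (q - q⁻¹)⁻¹ * u₁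 ^ 3 * u₂ * u₃ ^ 2 + ((-1) : ℂ) * q ^ 2 * ν * (q - q⁻¹)⁻¹ * u₁ ^ 3 * u₂ ^ 2 * u₃ + q ^ 2 * ν ^ 2 * u₁ ^ 2 * u₂ ^ 2 * u₃ ^ 2 + ((-1) : ℂ) * q ^ 2 * ν ^ 2 * u₁ ^ 2 * u₂ ^ 3 * u₃ + ((-1) : ℂ) * q ^ 2 * ν ^ 2 * u₁ ^ 3 * u₂ * u₃ ^ 2 + q ^ 2 * ν ^ 2 * u₁ ^ 3 * u₂ ^ 2 * u₃ + (3 : ℂ) * q ^ 2 * ν ^ 2 * ν⁻¹ * (q - q⁻¹)⁻¹ * u₁ ^ 2 * u₂ ^ 2 * u₃ ^ 2 + ((-3) : ℂ) * q ^ 2 * ν ^ 2 * ν⁻¹ * (q - q⁻¹)⁻¹ * u₁ ^ 2 * u₂ ^ 3 * u₃ + ((-3) : ℂ) * q ^ 2 * ν ^ 2 * ν⁻¹ * (q - q⁻¹)⁻¹ * u₁ ^ 3 * u₂ * u₃ ^ 2 + (3 : ℂ) * q ^ 2 * ν ^ 2 * ν⁻¹ * (q - q⁻¹)⁻¹ *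 u₁ ^ 3 * u₂ ^ 2 * u₃ + ((-2) : ℂ) * q ^ 2 * ν ^ 3 * (q - q⁻¹)⁻¹ * u₁ ^ 2 * u₂ ^ 2 * u₃ ^ 2 + (2 : ℂ) * q ^ 2 * ν ^ 3 * (q - q⁻¹)⁻¹ * u₁ ^ 2 * u₂ ^ 3 * u₃ + (2 : ℂ) * q ^ 2 * ν ^ 3 * (q - q⁻¹)⁻¹ * u₁ ^ 3 * u₂ * u₃ ^ 2 + ((-2) : ℂ) * q ^ 2 * ν ^ 3 * (q - q⁻¹)⁻¹ * u₁ ^ 3 * u₂ ^ 2 * u₃ + ((-2) : ℂ) * q ^ 2 * q⁻¹ * ν * u₁ * u₂ ^ 2 * u₃ ^ 3 + (2 : ℂ) * q ^ 2 * q⁻¹ * ν * u₁ * u₂ ^ 3 * u₃ ^ 2 + (2 : ℂ) * q ^ 2 * q⁻¹ * ν * u₁ ^ 2 * u₂ * u₃ ^ 3 + ((-2) : ℂ) * q ^ 2 * q⁻¹ * ν * u₁ ^ 2 * u₂ ^ 2 * u₃ ^ 2 + q ^ 3 * ν * u₁ * u₂ ^ 2 * u₃ ^ 3 + ((-1) :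 ℂ) * q ^ 3 * ν * u₁ * u₂ ^ 3 * u₃ ^ 2 + ((-1) : ℂ) * q ^ 3 * ν * u₁ ^ 2 * u₂ * u₃ ^ 3 + q ^ 3 * ν * u₁ ^ 2 * u₂ ^ 2 * u₃ ^ 2) * hqq + (((-3) : ℂ) * ν * (q - q⁻¹)⁻¹ * u₁ ^ 2 * u₂ ^ 2 * u₃ ^ 2 + (3 : ℂ) * ν * (q - q⁻¹)⁻¹ * u₁ ^ 2 * u₂ ^ 3 * u₃ + (3 : ℂ) * ν * (q - q⁻¹)⁻¹ * u₁ ^ 3 * u₂ * u₃ ^ 2 + ((-3) : ℂ) * ν * (q - q⁻¹)⁻¹ * u₁ ^ 3 * u₂ ^ 2 * u₃ + (2 : ℂ) * ν ^ 2 * u₁ ^ 2 * u₂ ^ 2 * u₃ ^ 2 + ((-2) : ℂ) * ν ^ 2 * u₁ ^ 2 * u₂ ^ 3 * u₃ + ((-2) : ℂ) * ν ^ 2 * u₁ ^ 3 * u₂ * u₃ ^ 2 + (2 : ℂ) * ν ^ 2 * u₁ ^ 3 * u₂ ^ 3 + (2 : ℂ) * ν ^ 2 * u₁ ^ 4 *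 u₂ * u₃ + ((-2) : ℂ) * ν ^ 2 * u₁ ^ 4 * u₂ ^ 2 + ((-1) : ℂ) * q⁻¹ * ν * u₁ * u₂ ^ 2 * u₃ ^ 3 + q⁻¹ * ν * u₁ * u₂ ^ 3 * u₃ ^ 2 + q⁻¹ * ν * u₁ ^ 2 * u₂ * u₃ ^ 3 + ((-1) : ℂ) * q⁻¹ * ν * u₁ ^ 2 * u₂ ^ 3 * u₃ + ((-1) : ℂ) * q⁻¹ * ν * u₁ ^ 3 * u₂ * u₃ ^ 2 + q⁻¹ * ν * u₁ ^ 3 * u₂ ^ 2 * u₃ + ((-3) : ℂ) * q⁻¹ * ν ^ 2 * (q - q⁻¹)⁻¹ * u₁ ^ 3 * u₂ ^ 2 * u₃ + (3 : ℂ) * q⁻¹ * ν ^ 2 * (q - q⁻¹)⁻¹ * u₁ ^ 3 * u₂ ^ 3 + (3 : ℂ) * q⁻¹ * ν ^ 2 * (q - q⁻¹)⁻¹ * u₁ ^ 4 * u₂ * u₃ + ((-3) : ℂ) * q⁻¹ * ν ^ 2 * (q - q⁻¹)⁻¹ * u₁ ^ 4 * u₂ ^ 2 + q⁻¹ ^ 2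 * ν * (q - q⁻¹)⁻¹ * u₁ ^ 2 * u₂ ^ 2 * u₃ ^ 2 + ((-1) : ℂ) * q⁻¹ ^ 2 * ν * (q - q⁻¹)⁻¹ * u₁ ^ 2 * u₂ ^ 3 * u₃ + ((-1) : ℂ) * q⁻¹ ^ 2 * ν * (q - q⁻¹)⁻¹ * u₁ ^ 3 * u₂ * u₃ ^ 2 + q⁻¹ ^ 2 * ν * (q - q⁻¹)⁻¹ * u₁ ^ 3 * u₂ ^ 2 * u₃ + ((-1) : ℂ) * q⁻¹ ^ 2 * ν ^ 2 * u₁ ^ 2 * u₂ ^ 2 * u₃ ^ 2 + q⁻¹ ^ 2 * ν ^ 2 * u₁ ^ 2 * u₂ ^ 3 * u₃ + q⁻¹ ^ 2 * ν ^ 2 * u₁ ^ 3 * u₂ * u₃ ^ 2 + ((-1) : ℂ) * q⁻¹ ^ 2 * ν ^ 2 * u₁ ^ 3 * u₂ ^ 3 + ((-1) : ℂ) * q⁻¹ ^ 2 * ν ^ 2 * u₁ ^ 4 * u₂ * u₃ + q⁻¹ ^ 2 * ν ^ 2 * u₁ ^ 4 * u₂ ^ 2 + q⁻¹ ^ 3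 * ν ^ 2 * (q - q⁻¹)⁻¹ * u₁ ^ 3 * u₂ ^ 2 * u₃ + ((-1) : ℂ) * q⁻¹ ^ 3 * ν ^ 2 * (q - q⁻¹)⁻¹ * u₁ ^ 3 * u₂ ^ 3 + ((-1) : ℂ) * q⁻¹ ^ 3 * ν ^ 2 * (q - q⁻¹)⁻¹ * u₁ ^ 4 * u₂ * u₃ + q⁻¹ ^ 3 * ν ^ 2 * (q - q⁻¹)⁻¹ * u₁ ^ 4 * u₂ ^ 2 + (2 : ℂ) * q * ν * u₁ * u₂ ^ 2 * u₃ ^ 3 + ((-2) : ℂ) * q * ν * u₁ * u₂ ^ 3 * u₃ ^ 2 + ((-2) : ℂ) * q * ν * u₁ ^ 2 * u₂ * u₃ ^ 3 + (2 : ℂ) * q * ν * u₁ ^ 2 * u₂ ^ 3 * u₃ + (2 : ℂ) * q * ν * u₁ ^ 3 * u₂ * u₃ ^ 2 + ((-2) : ℂ) * q * ν * u₁ ^ 3 * u₂ ^ 2 * u₃ + (3 : ℂ) * q * ν ^ 2 * (q - q⁻¹)⁻¹ * u₁ ^ 3 * u₂ ^ 2 * u₃ + ((-3) : ℂ) * q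 * ν ^ 2 * (q - q⁻¹)⁻¹ * u₁ ^ 3 * u₂ ^ 3 + ((-3) : ℂ) * q * ν ^ 2 * (q - q⁻¹)⁻¹ * u₁ ^ 4 * u₂ * u₃ + (3 : ℂ) * q * ν ^ 2 * (q - q⁻¹)⁻¹ * u₁ ^ 4 * u₂ ^ 2 + (3 : ℂ) * q ^ 2 * ν * (q - q⁻¹)⁻¹ * u₁ ^ 2 * u₂ ^ 2 * u₃ ^ 2 + ((-3) : ℂ) * q ^ 2 * ν * (q - q⁻¹)⁻¹ * u₁ ^ 2 * u₂ ^ 3 * u₃ + ((-3) : ℂ) * q ^ 2 * ν * (q - q⁻¹)⁻¹ * u₁ ^ 3 * u₂ * u₃ ^ 2 + (3 : ℂ) * q ^ 2 * ν * (q - q⁻¹)⁻¹ * u₁ ^ 3 * u₂ ^ 2 * u₃ + ((-1) : ℂ) * q ^ 2 * ν ^ 2 * u₁ ^ 2 * u₂ ^ 2 * u₃ ^ 2 + q ^ 2 * ν ^ 2 * u₁ ^ 2 * u₂ ^ 3 * u₃ + q ^ 2 * ν ^ 2 * u₁ ^ 3 * u₂ * u₃ ^ 2 + ((-1) : ℂ)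 * q ^ 2 * ν ^ 2 * u₁ ^ 3 * u₂ ^ 3 + ((-1) : ℂ) * q ^ 2 * ν ^ 2 * u₁ ^ 4 * u₂ * u₃ + q ^ 2 * ν ^ 2 * u₁ ^ 4 * u₂ ^ 2 + ((-1) : ℂ) * q ^ 3 * ν * u₁ * u₂ ^ 2 * u₃ ^ 3 + q ^ 3 * ν * u₁ * u₂ ^ 3 * u₃ ^ 2 + q ^ 3 * ν * u₁ ^ 2 * u₂ * u₃ ^ 3 + ((-1) : ℂ) * q ^ 3 * ν * u₁ ^ 2 * u₂ ^ 3 * u₃ + ((-1) : ℂ) * q ^ 3 * ν * u₁ ^ 3 * u₂ * u₃ ^ 2 + q ^ 3 * ν * u₁ ^ 3 * u₂ ^ 2 * u₃ + ((-1) : ℂ) * q ^ 3 * ν ^ 2 * (q - q⁻¹)⁻¹ * u₁ ^ 3 * u₂ ^ 2 * u₃ + q ^ 3 * ν ^ 2 * (q - q⁻¹)⁻¹ * u₁ ^ 3 * u₂ ^ 3 + q ^ 3 * ν ^ 2 * (q - q⁻¹)⁻¹ * u₁ ^ 4 * u₂ * u₃ + ((-1) : ℂ) * q ^ 3 * ν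 ^ 2 * (q - q⁻¹)⁻¹ * u₁ ^ 4 * u₂ ^ 2 + ((-1) : ℂ) * q ^ 4 * ν * (q - q⁻¹)⁻¹ * u₁ ^ 2 * u₂ ^ 2 * u₃ ^ 2 + q ^ 4 * ν * (q - q⁻¹)⁻¹ * u₁ ^ 2 * u₂ ^ 3 * u₃ + q ^ 4 * ν * (q - q⁻¹)⁻¹ * u₁ ^ 3 * u₂ * u₃ ^ 2 + ((-1) : ℂ) * q ^ 4 * ν * (q - q⁻¹)⁻¹ * u₁ ^ 3 * u₂ ^ 2 * u₃) * hvv + ((2 : ℂ) * ν ^ 2 * u₁ ^ 3 * u₂ ^ 2 * u₃ + ((-2) : ℂ) * ν ^ 2 * u₁ ^ 3 * u₂ ^ 3 + ((-2) : ℂ) * ν ^ 2 * u₁ ^ 4 * u₂ * u₃ + (2 : ℂ) * ν ^ 2 * u₁ ^ 4 * u₂ ^ 2 + ((-2) : ℂ) * ν ^ 4 * u₁ ^ 3 * u₂ ^ 2 * u₃ + (2 : ℂ) * ν ^ 4 * u₁ ^ 3 * u₂ ^ 3 + (2 : ℂ) * ν ^ 4 * u₁ ^ 4 * u₂ * u₃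 + ((-2) : ℂ) * ν ^ 4 * u₁ ^ 4 * u₂ ^ 2 + ((-1) : ℂ) * q⁻¹ * ν * u₁ ^ 2 * u₂ ^ 2 * u₃ ^ 2 + q⁻¹ * ν * u₁ ^ 2 * u₂ ^ 3 * u₃ + q⁻¹ * ν * u₁ ^ 3 * u₂ * u₃ ^ 2 + ((-1) : ℂ) * q⁻¹ * ν * u₁ ^ 3 * u₂ ^ 2 * u₃ + q⁻¹ * ν ^ 3 * u₁ ^ 2 * u₂ ^ 2 * u₃ ^ 2 + ((-1) : ℂ) * q⁻¹ * ν ^ 3 * u₁ ^ 2 * u₂ ^ 3 * u₃ + ((-1) : ℂ) * q⁻¹ * ν ^ 3 * u₁ ^ 3 * u₂ * u₃ ^ 2 + q⁻¹ * ν ^ 3 * u₁ ^ 3 * u₂ ^ 2 * u₃ + ((-1) : ℂ) * q⁻¹ ^ 2 * ν ^ 2 * u₁ ^ 3 * u₂ ^ 2 * u₃ + q⁻¹ ^ 2 * ν ^ 2 * u₁ ^ 3 * u₂ ^ 3 + q⁻¹ ^ 2 * ν ^ 2 * u₁ ^ 4 * u₂ * u₃ + ((-1) : ℂ) * q⁻¹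 ^ 2 * ν ^ 2 * u₁ ^ 4 * u₂ ^ 2 + q⁻¹ ^ 2 * ν ^ 4 * u₁ ^ 3 * u₂ ^ 2 * u₃ + ((-1) : ℂ) * q⁻¹ ^ 2 * ν ^ 4 * u₁ ^ 3 * u₂ ^ 3 + ((-1) : ℂ) * q⁻¹ ^ 2 * ν ^ 4 * u₁ ^ 4 * u₂ * u₃ + q⁻¹ ^ 2 * ν ^ 4 * u₁ ^ 4 * u₂ ^ 2 + (2 : ℂ) * q * ν * u₁ ^ 2 * u₂ ^ 2 * u₃ ^ 2 + ((-2) : ℂ) * q * ν * u₁ ^ 2 * u₂ ^ 3 * u₃ + ((-2) : ℂ) * q * ν * u₁ ^ 3 * u₂ * u₃ ^ 2 + (2 : ℂ) * q * ν * u₁ ^ 3 * u₂ ^ 2 * u₃ + ((-2) : ℂ) * q * ν ^ 3 * u₁ ^ 2 * u₂ ^ 2 * u₃ ^ 2 + (2 : ℂ) * q * ν ^ 3 * u₁ ^ 2 * u₂ ^ 3 * u₃ + (2 : ℂ) * q * ν ^ 3 * u₁ ^ 3 * u₂ * u₃ ^ 2 + ((-2) : ℂ) * q * ν ^ 3 *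 u₁ ^ 3 * u₂ ^ 2 * u₃ + ((-1) : ℂ) * q ^ 2 * ν ^ 2 * u₁ ^ 3 * u₂ ^ 2 * u₃ + q ^ 2 * ν ^ 2 * u₁ ^ 3 * u₂ ^ 3 + q ^ 2 * ν ^ 2 * u₁ ^ 4 * u₂ * u₃ + ((-1) : ℂ) * q ^ 2 * ν ^ 2 * u₁ ^ 4 * u₂ ^ 2 + q ^ 2 * ν ^ 4 * u₁ ^ 3 * u₂ ^ 2 * u₃ + ((-1) : ℂ) * q ^ 2 * ν ^ 4 * u₁ ^ 3 * u₂ ^ 3 + ((-1) : ℂ) * q ^ 2 * ν ^ 4 * u₁ ^ 4 * u₂ * u₃ + q ^ 2 * ν ^ 4 * u₁ ^ 4 * u₂ ^ 2 + ((-1) : ℂ) * q ^ 3 * ν * u₁ ^ 2 * u₂ ^ 2 * u₃ ^ 2 + q ^ 3 * ν * u₁ ^ 2 * u₂ ^ 3 * u₃ + q ^ 3 * ν * u₁ ^ 3 * u₂ * u₃ ^ 2 + ((-1) : ℂ) * q ^ 3 * ν * u₁ ^ 3 * u₂ ^ 2 * u₃ + q ^ 3 * ν ^ 3 * u₁ ^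 2 * u₂ ^ 2 * u₃ ^ 2 + ((-1) : ℂ) * q ^ 3 * ν ^ 3 * u₁ ^ 2 * u₂ ^ 3 * u₃ + ((-1) : ℂ) * q ^ 3 * ν ^ 3 * u₁ ^ 3 * u₂ * u₃ ^ 2 + q ^ 3 * ν ^ 3 * u₁ ^ 3 * u₂ ^ 2 * u₃) * hDD
  · ring
  · ring
  · ring
  · ring
  · ring
  · ring
  · ring

/-- The baxterized elements of the Birman–Murakami–Wenzl algebra satisfy the Yang–Baxter
(braid) relation. -/
theorem bax_yang_baxter {A : Type*} [Ring A] [Algebra ℂ A] (n : ℕ) (hn : 3 ≤ n)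
    (q ν : ℂ) (hq0 : q ≠ 0) (hν0 : ν ≠ 0) (hq1 : q ^ 2 ≠ 1)
    (T : ℕ → Aˣ)
    (hbraid : ∀ i, 1 ≤ i → i + 2 ≤ n →
      (T i : A) * (T (i + 1) : A) * (T i : A) = (T (i + 1) : A) * (T i : A) * (T (i + 1) : A))
    (hcomm : ∀ i j, 1 ≤ i → j + 1 ≤ n → i + 2 ≤ j → (T i : A) * (T j : A) = (T j : A) * (T i : A))
    (hκT : ∀ i, 1 ≤ i → i + 1 ≤ n →
      kap q (T i) * (T i : A) = ν • kap q (T i) ∧ (T i : A) * kap q (T i) = ν • kap q (T i))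
    (hκdown : ∀ i, 2 ≤ i → i + 1 ≤ n →
      kap q (T i) * (T (i - 1) : A) * kap q (T i) = ν⁻¹ • kap q (T i) ∧
      kap q (T i) * (((T (i - 1))⁻¹ : Aˣ) : A) * kap q (T i) = ν • kap q (T i))
    (hκup : ∀ i, 1 ≤ i → i + 2 ≤ n →
      kap q (T i) * (T (i + 1) : A) * kap q (T i) = ν⁻¹ • kap q (T i) ∧
      kap q (T i) * (((T (i + 1))⁻¹ : Aˣ) : A) * kap q (T i) = ν • kap q (T i)) :
    ∀ i, 1 ≤ i → i + 2 ≤ n → ∀ u₁ u₂ u₃ : ℂ,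
      u₁ ≠ 0 → u₂ ≠ 0 → u₃ ≠ 0 → u₁ ≠ u₂ → u₁ ≠ u₃ → u₂ ≠ u₃ →
      ν * u₂ + q * u₃ ≠ 0 → ν * u₁ + q * u₃ ≠ 0 → ν * u₁ + q * u₂ ≠ 0 →
      bax q ν (T i) u₂ u₃ * bax q ν (T (i + 1)) u₁ u₃ * bax q ν (T i) u₁ u₂ =
        bax q ν (T (i + 1)) u₁ u₂ * bax q ν (T i) u₁ u₃ * bax q ν (T (i + 1)) u₂ u₃ := by
  intro i h1 h2 u₁ u₂ u₃ hu₁ hu₂ hu₃ h12 h13 h23 hn23 hn13 hn12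
  obtain ⟨hkX, hXk⟩ := hκT i h1 (by omega)
  obtain ⟨hlY, hYl⟩ := hκT (i + 1) (by omega) (by omega)
  have hdown := hκdown (i + 1) (by omega) (by omega)
  rw [Nat.add_sub_cancel] at hdown
  obtain ⟨hlsl, hls'l⟩ := hdown
  obtain ⟨hktk, hkt'k⟩ := hκup i h1 h2
  exact bmw_yb q ν hq0 hν0 hq1 (T i) (T (i + 1)) (hbraid i h1 h2) hkX hXk hlY hYl
    hlsl hls'l hktk hkt'k u₁ u₂ u₃ hu₁ hu₂ hu₃ h12 h13 h23 hn23 hn13 hn12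
end

section
/- For every 1 ≤ i ≤ n-1 and all nonzero complex numbers u, v with u ≠ v, ν u + q v ≠ 0 and ν v + q u ≠ 0, one has the unitarity relation (u - v)² · T_i(u,v) T_i(v,u) = (u - q² v)(u - q^{-2} v) · 1; equivalently, when (u - q² v)(u - q^{-2} v) ≠ 0, T_i(v,u)^{-1} = T_i(u,v) · f(u,v) with f(u,v) := (u - v)²/((u - q² v)(u - q^{-2} v)). -/
section BaxAux
variable {A : Type*} [Ring A] [Algebra ℂ A]

private lemma prod_form (t k : A) (s ν δ a a' b b' : ℂ)
    (ht2 : t * t = 1 + s • t - (s * ν) • k)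
    (htκ : t * k = ν • k) (hκt : k * t = ν • k) (hκκ : k * k = δ • k) :
    (t + a • (1:A) + b • k) * (t + a' • (1:A) + b' • k) =
      (1 + a * a') • (1:A) + (s + a + a') • t +
        (a * b' + a' * b + ν * (b + b') - s * ν + b * b' * δ) • k := by
  simp only [mul_add, add_mul, smul_mul_assoc, mul_smul_comm, ht2, htκ, hκt, hκκ,
    smul_smul, one_mul, mul_one]
  module


set_option maxHeartbeats 1000000 in
private lemma e2aux (q ν u v : ℂ) (hq0 : q ≠ 0) (hν0 : ν ≠ 0)
    (hvu : v - u ≠ 0) (huv : u - v ≠ 0)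
    (h1 : ν * u + q * v ≠ 0) (h2 : ν * v + q * u ≠ 0) (hq2 : q ^ 2 - 1 ≠ 0) :
    (q ^ 2 - 1) * u / (q * (v - u)) * ((q ^ 2 - 1) * (ν * v) / (q * (ν * v + q * u))) +
      (q ^ 2 - 1) * v / (q * (u - v)) * ((q ^ 2 - 1) * (ν * u) / (q * (ν * u + q * v))) +
      ν * ((q ^ 2 - 1) * (ν * u) / (q * (ν * u + q * v)) +
        (q ^ 2 - 1) * (ν * v) / (q * (ν * v + q * u))) -
      (q ^ 2 - 1) / q * ν +
      (q ^ 2 - 1) * (ν * u) / (q * (ν * u + q * v)) *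
        ((q ^ 2 - 1) * (ν * v) / (q * (ν * v + q * u))) *
        (((q ^ 2 - 1) * ν - q * ν ^ 2 + q) / ((q ^ 2 - 1) * ν)) = 0 := by
  set D : ℂ :=
    q * (q * ((v - u) * ((u - v) * ((ν * u + q * v) * ((ν * v + q * u) * ((q ^ 2 - 1) * ν))))))
    with hD_def
  have hD : D ≠ 0 :=
    mul_ne_zero hq0 (mul_ne_zero hq0 (mul_ne_zero hvu (mul_ne_zero huv
      (mul_ne_zero h1 (mul_ne_zero h2 (mul_ne_zero hq2 hν0))))))
  have hT1 : (q ^ 2 - 1) * u / (q * (v - u)) *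
        ((q ^ 2 - 1) * (ν * v) / (q * (ν * v + q * u))) =
      ((q ^ 2 - 1) * u * ((q ^ 2 - 1) * (ν * v)) *
        ((u - v) * ((ν * u + q * v) * ((q ^ 2 - 1) * ν)))) / D := by
    rw [div_mul_div_comm,
      div_eq_div_iff (mul_ne_zero (mul_ne_zero hq0 hvu) (mul_ne_zero hq0 h2)) hD, hD_def]
    ring
  have hT2 : (q ^ 2 - 1) * v / (q * (u - v)) *
        ((q ^ 2 - 1) * (ν * u) / (q * (ν * u + q * v))) =
      ((q ^ 2 - 1) * v * ((q ^ 2 - 1) * (ν * u)) *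
        ((v - u) * ((ν * v + q * u) * ((q ^ 2 - 1) * ν)))) / D := by
    rw [div_mul_div_comm,
      div_eq_div_iff (mul_ne_zero (mul_ne_zero hq0 huv) (mul_ne_zero hq0 h1)) hD, hD_def]
    ring
  have hT3 : ν * ((q ^ 2 - 1) * (ν * u) / (q * (ν * u + q * v)) +
        (q ^ 2 - 1) * (ν * v) / (q * (ν * v + q * u))) =
      (ν * ((q ^ 2 - 1) * (ν * u) * (q * (ν * v + q * u)) +
          (q ^ 2 - 1) * (ν * v) * (q * (ν * u + q * v))) *
        ((v - u) * ((u - v) * ((q ^ 2 - 1) * ν)))) / D := by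
    rw [div_add_div _ _ (mul_ne_zero hq0 h1) (mul_ne_zero hq0 h2), ← mul_div_assoc,
      div_eq_div_iff (mul_ne_zero (mul_ne_zero hq0 h1) (mul_ne_zero hq0 h2)) hD, hD_def]
    ring
  have hT4 : (q ^ 2 - 1) / q * ν =
      ((q ^ 2 - 1) * ν *
        ((v - u) * ((u - v) * ((ν * u + q * v) * ((ν * v + q * u) * ((q ^ 2 - 1) * ν)))) * q)) /
        D := by
    rw [div_mul_eq_mul_div, div_eq_div_iff hq0 hD, hD_def]; ring
  have hT5 : (q ^ 2 - 1) * (ν * u) / (q * (ν * u + q * v)) *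
        ((q ^ 2 - 1) * (ν * v) / (q * (ν * v + q * u))) *
        (((q ^ 2 - 1) * ν - q * ν ^ 2 + q) / ((q ^ 2 - 1) * ν)) =
      ((q ^ 2 - 1) * (ν * u) * ((q ^ 2 - 1) * (ν * v)) *
        ((q ^ 2 - 1) * ν - q * ν ^ 2 + q) * ((v - u) * (u - v))) / D := by
    rw [div_mul_div_comm, div_mul_div_comm,
      div_eq_div_iff (mul_ne_zero (mul_ne_zero (mul_ne_zero hq0 h1) (mul_ne_zero hq0 h2))
        (mul_ne_zero hq2 hν0)) hD, hD_def]
    ring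
  rw [hT1, hT2, hT3, hT4, hT5, ← add_div, ← add_div, div_sub_div_same,
    ← add_div, div_eq_zero_iff]
  left
  ring

set_option maxHeartbeats 2000000 in
private lemma bax_key (q ν : ℂ) (hq0 : q ≠ 0) (hν0 : ν ≠ 0) (hq1 : q ^ 2 ≠ 1)
    (x : Aˣ) (hκt : kap q x * (x : A) = ν • kap q x) (htκ : (x : A) * kap q x = ν • kap q x)
    (u v : ℂ) (hu : u ≠ 0) (hv : v ≠ 0) (huv : u ≠ v)
    (h1 : ν * u + q * v ≠ 0) (h2 : ν * v + q * u ≠ 0) :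
    ((u - v) ^ 2) • (bax q ν x u v * bax q ν x v u) =
      ((u - q ^ 2 * v) * (u - (q ^ 2)⁻¹ * v)) • (1 : A) := by
  have hs : q - q⁻¹ ≠ 0 := by
    intro h
    apply hq1
    have hq : q = q⁻¹ := sub_eq_zero.mp h
    rw [sq]; nth_rewrite 2 [hq]; exact mul_inv_cancel₀ hq0
  set s : ℂ := q - q⁻¹ with hs_def
  set t : A := (x : A) with ht_def
  set ti : A := ((x⁻¹ : Aˣ) : A) with hti_def
  set k : A := kap q x with hk_def
  have htti : t * ti = 1 := x.mul_inv
  have htsub : t - ti = s • (1 : A) - s • k := by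
    rw [hk_def, kap]
    rw [smul_sub, smul_smul, mul_inv_cancel₀ hs, one_smul]
    abel
  have ht2 : t * t = 1 + s • t - (s * ν) • k := by
    have : t * t - 1 = t * (t - ti) := by rw [mul_sub, htti]
    rw [htsub, mul_sub, mul_smul_comm, mul_one, mul_smul_comm, htκ, smul_smul] at this
    linear_combination (norm := module) this
  have hκti : k * ti = ν⁻¹ • k := by
    have h := congrArg (fun y => ν⁻¹ • (y * ti)) hκt
    simp only [smul_mul_assoc, smul_smul, inv_mul_cancel₀ hν0, one_smul, mul_assoc, htti,
      mul_one] at h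
    exact h.symm
  set δ : ℂ := s⁻¹ * (s - ν + ν⁻¹) with hδ_def
  have hκκ : k * k = δ • k := by
    have h := congrArg (fun y => k * y) htsub
    simp only [mul_sub, mul_smul_comm, mul_one] at h
    rw [hκt, hκti] at h
    have : s • (k * k) = (s - ν + ν⁻¹) • k := by
      linear_combination (norm := module) h
    have h2 := congrArg (fun y => s⁻¹ • y) this
    simpa [smul_smul, inv_mul_cancel₀ hs, hδ_def] using h2
  set a : ℂ := s / (v / u - 1) with ha_def
  set a' : ℂ := s / (u / v - 1) with ha'_def
  set b : ℂ := s / (1 + ν⁻¹ * q * v / u) with hb_def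
  set b' : ℂ := s / (1 + ν⁻¹ * q * u / v) with hb'_def
  have hbax1 : bax q ν x u v = t + a • (1:A) + b • k := rfl
  have hbax2 : bax q ν x v u = t + a' • (1:A) + b' • k := rfl
  have huv' : u - v ≠ 0 := sub_ne_zero.mpr huv
  have hvu : v - u ≠ 0 := sub_ne_zero.mpr (Ne.symm huv)
  have hs' : q - q⁻¹ ≠ 0 := hs
  have hd1 : v / u - 1 ≠ 0 := by
    intro h; exact huv ((div_eq_one_iff_eq hu).mp (by linear_combination h)).symm
  have hd2 : u / v - 1 ≠ 0 := by
    intro h; exact huv ((div_eq_one_iff_eq hv).mp (by linear_combination h))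
  have hd3 : 1 + ν⁻¹ * q * v / u ≠ 0 := by
    intro h; apply h1; field_simp at h; linear_combination h
  have hd4 : 1 + ν⁻¹ * q * u / v ≠ 0 := by
    intro h; apply h2; field_simp at h; linear_combination h
  have ha : a = s * u / (v - u) := by
    rw [ha_def, div_eq_div_iff hd1 hvu]; field_simp
  have ha' : a' = s * v / (u - v) := by
    rw [ha'_def, div_eq_div_iff hd2 huv']; field_simp
  have hb : b = s * (ν * u) / (ν * u + q * v) := by
    rw [hb_def, div_eq_div_iff hd3 h1]; field_simp
  have hb' : b' = s * (ν * v) / (ν * v + q * u) := by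
    rw [hb'_def, div_eq_div_iff hd4 h2]; field_simp
  have e1 : s + a + a' = 0 := by
    rw [ha, ha']; field_simp; ring
  have hq2 : q ^ 2 - 1 ≠ 0 := sub_ne_zero.mpr hq1
  have haq : a = (q ^ 2 - 1) * u / (q * (v - u)) := by
    rw [ha, hs_def, div_eq_div_iff hvu (mul_ne_zero hq0 hvu)]; field_simp
  have ha'q : a' = (q ^ 2 - 1) * v / (q * (u - v)) := by
    rw [ha', hs_def, div_eq_div_iff huv' (mul_ne_zero hq0 huv')]; field_simp
  have hbq : b = (q ^ 2 - 1) * (ν * u) / (q * (ν * u + q * v)) := by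
    rw [hb, hs_def, div_eq_div_iff h1 (mul_ne_zero hq0 h1)]; field_simp
  have hb'q : b' = (q ^ 2 - 1) * (ν * v) / (q * (ν * v + q * u)) := by
    rw [hb', hs_def, div_eq_div_iff h2 (mul_ne_zero hq0 h2)]; field_simp
  have hsq : s = (q ^ 2 - 1) / q := by
    rw [hs_def, eq_div_iff hq0]; field_simp
  have hinv : (q - q⁻¹)⁻¹ = q / (q ^ 2 - 1) := by
    rw [inv_eq_one_div, div_eq_div_iff hs' hq2]; field_simp
  have hδq : δ = ((q ^ 2 - 1) * ν - q * ν ^ 2 + q) / ((q ^ 2 - 1) * ν) := by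
    rw [hδ_def, hs_def, hinv, eq_div_iff (mul_ne_zero hq2 hν0)]
    field_simp
  have e2 : a * b' + a' * b + ν * (b + b') - s * ν + b * b' * δ = 0 := by
    rw [haq, ha'q, hbq, hb'q, hsq, hδq]
    exact e2aux q ν u v hq0 hν0 hvu huv' h1 h2 hq2
  have e3 : (u - v) ^ 2 * (1 + a * a') = (u - q ^ 2 * v) * (u - (q ^ 2)⁻¹ * v) := by
    rw [ha, ha', hs_def]
    field_simp [hvu, huv', hq0]
    ring
  rw [hbax1, hbax2, prod_form t k s ν δ a a' b b' ht2 htκ hκt hκκ, e1, e2, zero_smul, zero_smul,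
    add_zero, add_zero, smul_smul, e3]

end BaxAux

/-- Unitarity of the baxterized BMW elements:
`(u - v)² T_i(u,v) T_i(v,u) = (u - q²v)(u - q⁻²v) · 1`, and when the right-hand scalar is
nonzero, `f(u,v) T_i(u,v)` is the two-sided inverse of `T_i(v,u)`,
`f(u,v) = (u - v)²/((u - q²v)(u - q⁻²v))`. -/
theorem bax_unitarity {A : Type*} [Ring A] [Algebra ℂ A] (n : ℕ) (hn : 3 ≤ n)
    (q ν : ℂ) (hq0 : q ≠ 0) (hν0 : ν ≠ 0) (hq1 : q ^ 2 ≠ 1)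
    (T : ℕ → Aˣ)
    (hbraid : ∀ i, 1 ≤ i → i + 2 ≤ n →
      (T i : A) * (T (i + 1) : A) * (T i : A) = (T (i + 1) : A) * (T i : A) * (T (i + 1) : A))
    (hcomm : ∀ i j, 1 ≤ i → j + 1 ≤ n → i + 2 ≤ j → (T i : A) * (T j : A) = (T j : A) * (T i : A))
    (hκT : ∀ i, 1 ≤ i → i + 1 ≤ n →
      kap q (T i) * (T i : A) = ν • kap q (T i) ∧ (T i : A) * kap q (T i) = ν • kap q (T i))
    (hκdown : ∀ i, 2 ≤ i → i + 1 ≤ n →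
      kap q (T i) * (T (i - 1) : A) * kap q (T i) = ν⁻¹ • kap q (T i) ∧
      kap q (T i) * (((T (i - 1))⁻¹ : Aˣ) : A) * kap q (T i) = ν • kap q (T i))
    (hκup : ∀ i, 1 ≤ i → i + 2 ≤ n →
      kap q (T i) * (T (i + 1) : A) * kap q (T i) = ν⁻¹ • kap q (T i) ∧
      kap q (T i) * (((T (i + 1))⁻¹ : Aˣ) : A) * kap q (T i) = ν • kap q (T i)) :
    ∀ i, 1 ≤ i → i + 1 ≤ n → ∀ u v : ℂ,
      u ≠ 0 → v ≠ 0 → u ≠ v → ν * u + q * v ≠ 0 → ν * v + q * u ≠ 0 →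
      ((u - v) ^ 2) • (bax q ν (T i) u v * bax q ν (T i) v u) =
        ((u - q ^ 2 * v) * (u - (q ^ 2)⁻¹ * v)) • (1 : A) ∧
      ((u - q ^ 2 * v) * (u - (q ^ 2)⁻¹ * v) ≠ 0 →
        bax q ν (T i) v u *
            (((u - v) ^ 2 / ((u - q ^ 2 * v) * (u - (q ^ 2)⁻¹ * v))) • bax q ν (T i) u v) = 1 ∧
        (((u - v) ^ 2 / ((u - q ^ 2 * v) * (u - (q ^ 2)⁻¹ * v))) • bax q ν (T i) u v) *
            bax q ν (T i) v u = 1) := by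
  intro i hi hin u v hu hv huv h1 h2
  obtain ⟨hκT1, hκT2⟩ := hκT i hi hin
  have key := bax_key q ν hq0 hν0 hq1 (T i) hκT1 hκT2 u v hu hv huv h1 h2
  have key' := bax_key q ν hq0 hν0 hq1 (T i) hκT1 hκT2 v u hv hu (Ne.symm huv) h2 h1
  have hq2 : (q : ℂ) ^ 2 ≠ 0 := pow_ne_zero 2 hq0
  have hsc : (v - q ^ 2 * u) * (v - (q ^ 2)⁻¹ * u) =
      (u - q ^ 2 * v) * (u - (q ^ 2)⁻¹ * v) := by
    field_simp; ring
  have key'' : ((u - v) ^ 2) • (bax q ν (T i) v u * bax q ν (T i) u v) =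
      ((u - q ^ 2 * v) * (u - (q ^ 2)⁻¹ * v)) • (1 : A) := by
    rw [show ((u - v) ^ 2 : ℂ) = (v - u) ^ 2 by ring, key', hsc]
  refine ⟨key, fun hc => ?_⟩
  have hf : (u - v) ^ 2 / ((u - q ^ 2 * v) * (u - (q ^ 2)⁻¹ * v)) =
      ((u - q ^ 2 * v) * (u - (q ^ 2)⁻¹ * v))⁻¹ * (u - v) ^ 2 := by
    rw [div_eq_inv_mul]
  constructor
  · rw [mul_smul_comm, hf, mul_smul, key'', smul_smul, inv_mul_cancel₀ hc, one_smul]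
  · rw [smul_mul_assoc, hf, mul_smul, key, smul_smul, inv_mul_cancel₀ hc, one_smul]
end

section
/- The Jucys–Murphy elements y_1 := 1 and y_{k+1} := T_k ⋯ T_2 T_1² T_2 ⋯ T_k (1 ≤ k ≤ n-1) pairwise commute: y_i y_j = y_j y_i for all 1 ≤ i, j ≤ n. Moreover κ_j y_{j+1} y_j = y_j y_{j+1} κ_j = ν² κ_j for all 1 ≤ j ≤ n-1. -/
/-- The Jucys–Murphy elements `y_1 = 1`, `y_{k+1} = T_k ⋯ T_2 T_1² T_2 ⋯ T_k`
(defined recursively by `y_{k+1} = T_k y_k T_k`). -/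
def jmy {A : Type*} [Ring A] (T : ℕ → Aˣ) : ℕ → A
  | 0 => 1
  | 1 => 1
  | (k + 2) => (T (k + 1) : A) * jmy T (k + 1) * (T (k + 1) : A)

section Aux

/-- Auxiliary: braid-commutation core, step for `y_i y_{i+1} = y_{i+1} y_i`. -/
theorem jmy_comm_core {A : Type*} [Ring A] (a b : Aˣ) (w : A)
    (hb : (b:A)*a*b = (a:A)*b*a) (hwa : (a:A)*w = w*(a:A))
    (hcc : (b:A)*w*b*w = w*((b:A)*w*b)) :
    ((a:A)*((b:A)*w*b)*a) * ((b:A)*w*b) = ((b:A)*w*b) * ((a:A)*((b:A)*w*b)*a) := by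
  have hbx : ∀ x : A, (b:A)*((a:A)*((b:A)*x)) = (a:A)*((b:A)*((a:A)*x)) := fun x => by
    rw [← mul_assoc, ← mul_assoc, hb, mul_assoc, mul_assoc]
  have hwax : ∀ x : A, (a:A)*(w*x) = w*((a:A)*x) := fun x => by
    rw [← mul_assoc, hwa, mul_assoc]
  have hb2 : (a:A)*((b:A)*(a:A)) = (b:A)*((a:A)*(b:A)) := by
    rw [← mul_assoc, ← mul_assoc]; exact hb.symm
  have hccx : ∀ x : A, (b:A)*(w*((b:A)*(w*x))) = w*((b:A)*(w*((b:A)*x))) := fun x => by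
    have h1 : ((b:A)*w*b*w)*x = (w*((b:A)*w*b))*x := by rw [hcc]
    simpa [mul_assoc] using h1
  have L : ((a:A)*((b:A)*w*b)*a) * ((b:A)*w*b)
      = (b:A)*((a:A)*(w*((b:A)*(w*((b:A)*((a:A)*b)))))) := by
    have e0 : ((a:A)*((b:A)*w*b)*a) * ((b:A)*w*b)
        = (a:A)*((b:A)*(w*((b:A)*((a:A)*((b:A)*(w*(b:A))))))) := by
      simp only [mul_assoc]
    rw [e0, hbx (w*(b:A)), ← hwax ((b:A)*((a:A)*(w*(b:A)))), hwax (b:A),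
      ← hbx (w*((b:A)*(w*((a:A)*(b:A))))), hccx ((a:A)*(b:A))]
  have R : ((b:A)*w*b) * ((a:A)*((b:A)*w*b)*a)
      = (b:A)*((a:A)*(w*((b:A)*(w*((b:A)*((a:A)*b)))))) := by
    have e0 : ((b:A)*w*b) * ((a:A)*((b:A)*w*b)*a)
        = (b:A)*(w*((b:A)*((a:A)*((b:A)*(w*((b:A)*(a:A))))))) := by
      simp only [mul_assoc]
    rw [e0, hbx (w*((b:A)*(a:A))), ← hwax ((b:A)*((a:A)*(w*((b:A)*(a:A))))),
      hwax ((b:A)*(a:A)), hb2]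
  rw [L, R]

/-- Auxiliary: the inductive core of `κ_j y_j T_j y_j = y_j T_j y_j κ_j = ν κ_j`. -/
theorem jmy_kap_core {A : Type*} [Ring A] [Algebra ℂ A] (δ ν : ℂ) (hν0 : ν ≠ 0)
    (a b : Aˣ) (w K K' : A)
    (hb : (b:A)*a*b = (a:A)*b*a) (hwa : (a:A)*w = w*(a:A))
    (hKba : K*b*a = (b:A)*a*K') (hK'ab : K'*a*b = (a:A)*b*K)
    (IHl : K'*(w*(b:A)*w) = ν•K') (IHr : (w*(b:A)*w)*K' = ν•K')
    (quadA : (a:A)*a = 1 + δ•(a:A) - (δ*ν)•K)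
    (quadB : (b:A)*b = 1 + δ•(b:A) - (δ*ν)•K')
    (haK : (a:A)*K = ν•K)
    (hKbK : K*b*K = ν⁻¹•K)
    (hKbiK : K*((b⁻¹:Aˣ):A)*K = ν•K)
    (hee : K'*K = ((a⁻¹:Aˣ):A)*((b⁻¹:Aˣ):A)*K)
    (hsubA : (a:A) - ((a⁻¹:Aˣ):A) = δ•(1:A) - δ•K)
    (hsubB : (b:A) - ((b⁻¹:Aˣ):A) = δ•(1:A) - δ•K') :
    K * ((b:A)*w*b * a * ((b:A)*w*b)) = ν•K ∧
    ((b:A)*w*b * a * ((b:A)*w*b)) * K = ν•K := by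
  have hbx : ∀ x : A, (b:A)*((a:A)*((b:A)*x)) = (a:A)*((b:A)*((a:A)*x)) := fun x => by
    rw [← mul_assoc, ← mul_assoc, hb, mul_assoc, mul_assoc]
  have hwax : ∀ x : A, (a:A)*(w*x) = w*((a:A)*x) := fun x => by
    rw [← mul_assoc, hwa, mul_assoc]
  have hKbax : ∀ x : A, K*((b:A)*((a:A)*x)) = (b:A)*((a:A)*(K'*x)) := fun x => by
    rw [← mul_assoc, ← mul_assoc, hKba, mul_assoc, mul_assoc]
  have hK'ab2 : K'*((a:A)*(b:A)) = (a:A)*((b:A)*K) := by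
    rw [← mul_assoc, hK'ab, mul_assoc]
  have IHlx : ∀ x : A, K'*(w*((b:A)*(w*x))) = ν•(K'*x) := fun x => by
    have h1 : (K'*(w*(b:A)*w))*x = (ν•K')*x := by rw [IHl]
    simpa [mul_assoc, smul_mul_assoc] using h1
  have IHrx : ∀ x : A, w*((b:A)*(w*(K'*x))) = ν•(K'*x) := fun x => by
    have h1 : ((w*(b:A)*w)*K')*x = (ν•K')*x := by rw [IHr]
    simpa [mul_assoc, smul_mul_assoc] using h1
  have hee2 : K'*K = ((a⁻¹:Aˣ):A)*(((b⁻¹:Aˣ):A)*K) := by rw [hee, mul_assoc]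
  have hBe : (b:A) = ((b⁻¹:Aˣ):A) + (δ•(1:A) - δ•K') := by rw [← hsubB]; abel
  have hAe : ((a⁻¹:Aˣ):A) = (a:A) - (δ•(1:A) - δ•K) := by rw [← hsubA]; abel
  have s1 : (a:A)*(K'*K) = ((b⁻¹:Aˣ):A)*K := by
    rw [hee2, ← mul_assoc, ← mul_assoc]
    rw [mul_assoc ((a:A)) _ _]
    rw [Units.mul_inv_cancel_left]
  have s2 : K*(((b⁻¹:Aˣ):A)*K) = ν•K := by rw [← mul_assoc]; exact hKbiK
  have t5 : (a:A)*((b:A)*K) = ((a⁻¹:Aˣ):A)*(((b⁻¹:Aˣ):A)*K) := by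
    have lhs : (a:A)*((b:A)*K)
        = (a:A)*(((b⁻¹:Aˣ):A)*K) + (δ*ν)•K - δ•(((b⁻¹:Aˣ):A)*K) := by
      calc (a:A)*((b:A)*K) = (a:A)*((((b⁻¹:Aˣ):A) + (δ•(1:A) - δ•K'))*K) := by rw [← hBe]
        _ = (a:A)*(((b⁻¹:Aˣ):A)*K) + δ•((a:A)*K) - δ•((a:A)*(K'*K)) := by
            simp only [add_mul, sub_mul, smul_mul_assoc, one_mul, mul_add, mul_sub, mul_smul_comm]
            abel
        _ = _ := by rw [haK, s1, smul_smul]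
    have rhs : ((a⁻¹:Aˣ):A)*(((b⁻¹:Aˣ):A)*K)
        = (a:A)*(((b⁻¹:Aˣ):A)*K) + (δ*ν)•K - δ•(((b⁻¹:Aˣ):A)*K) := by
      calc ((a⁻¹:Aˣ):A)*(((b⁻¹:Aˣ):A)*K)
          = ((a:A) - (δ•(1:A) - δ•K))*(((b⁻¹:Aˣ):A)*K) := by rw [← hAe]
        _ = (a:A)*(((b⁻¹:Aˣ):A)*K) - δ•(((b⁻¹:Aˣ):A)*K) + δ•(K*(((b⁻¹:Aˣ):A)*K)) := by
            simp only [sub_mul, smul_mul_assoc, one_mul]; abel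
        _ = _ := by rw [s2, smul_smul]; abel
    rw [lhs, rhs]
  have F1 : (b:A)*((a:A)*((a:A)*((b:A)*K))) = K := by
    have u1 : (b:A)*((a:A)*((b:A)*K)) = ν•((a:A)*((b:A)*K)) := by
      rw [hbx K, haK, mul_smul_comm, mul_smul_comm]
    have u2 : (b:A)*(K*((b:A)*K)) = ν⁻¹•((b:A)*K) := by
      rw [show K*((b:A)*K) = ν⁻¹•K from by rw [← mul_assoc]; exact hKbK, mul_smul_comm]
    have u3 : (b:A)*((b:A)*K) = K + δ•((b:A)*K) - (δ*ν)•(K'*K) := by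
      rw [← mul_assoc, quadB]
      simp only [add_mul, sub_mul, one_mul, smul_mul_assoc]
    calc (b:A)*((a:A)*((a:A)*((b:A)*K)))
        = (b:A)*(((a:A)*(a:A))*((b:A)*K)) := by rw [mul_assoc]
      _ = (b:A)*((1 + δ•(a:A) - (δ*ν)•K)*((b:A)*K)) := by rw [quadA]
      _ = (b:A)*((b:A)*K) + δ•((b:A)*((a:A)*((b:A)*K))) - (δ*ν)•((b:A)*(K*((b:A)*K))) := by
          simp only [add_mul, sub_mul, one_mul, smul_mul_assoc, mul_add, mul_sub, mul_smul_comm]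
      _ = (K + δ•((b:A)*K) - (δ*ν)•(K'*K)) + δ•(ν•((a:A)*((b:A)*K)))
            - (δ*ν)•(ν⁻¹•((b:A)*K)) := by rw [u1, u2, u3]
      _ = K + (δ*ν)•((a:A)*((b:A)*K)) - (δ*ν)•(K'*K) := by
          rw [smul_smul δ ν, smul_smul (δ*ν) ν⁻¹, mul_assoc δ ν ν⁻¹, mul_inv_cancel₀ hν0,
            mul_one]
          abel
      _ = K := by rw [t5, hee2]; abel
  constructor
  · have e0 : K * ((b:A)*w*b * a * ((b:A)*w*b))
        = K*((b:A)*(w*((b:A)*((a:A)*((b:A)*(w*(b:A))))))) := by simp only [mul_assoc]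
    rw [e0, hbx (w*(b:A)), ← hwax ((b:A)*((a:A)*(w*(b:A)))), hwax (b:A),
      hKbax (w*((b:A)*(w*((a:A)*(b:A))))), IHlx ((a:A)*(b:A)), hK'ab2]
    simp only [mul_smul_comm]
    rw [F1]
  · have e0 : ((b:A)*w*b * a * ((b:A)*w*b)) * K
        = (b:A)*(w*((b:A)*((a:A)*((b:A)*(w*((b:A)*K)))))) := by simp only [mul_assoc]
    rw [e0, hbx (w*((b:A)*K)), ← hwax ((b:A)*((a:A)*(w*((b:A)*K)))), hwax ((b:A)*K),
      ← hK'ab2, IHrx ((a:A)*(b:A)), hK'ab2]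
    simp only [mul_smul_comm]
    rw [F1]

end Aux

/-- The Jucys–Murphy elements of the BMW algebra pairwise commute and satisfy
`κ_j y_{j+1} y_j = y_j y_{j+1} κ_j = ν² κ_j`. -/
theorem jmy_commute {A : Type*} [Ring A] [Algebra ℂ A] (n : ℕ) (hn : 3 ≤ n)
    (q ν : ℂ) (hq0 : q ≠ 0) (hν0 : ν ≠ 0) (hq1 : q ^ 2 ≠ 1)
    (T : ℕ → Aˣ)
    (hbraid : ∀ i, 1 ≤ i → i + 2 ≤ n →
      (T i : A) * (T (i + 1) : A) * (T i : A) = (T (i + 1) : A) * (T i : A) * (T (i + 1) : A))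
    (hcomm : ∀ i j, 1 ≤ i → j + 1 ≤ n → i + 2 ≤ j → (T i : A) * (T j : A) = (T j : A) * (T i : A))
    (hκT : ∀ i, 1 ≤ i → i + 1 ≤ n →
      kap q (T i) * (T i : A) = ν • kap q (T i) ∧ (T i : A) * kap q (T i) = ν • kap q (T i))
    (hκdown : ∀ i, 2 ≤ i → i + 1 ≤ n →
      kap q (T i) * (T (i - 1) : A) * kap q (T i) = ν⁻¹ • kap q (T i) ∧
      kap q (T i) * (((T (i - 1))⁻¹ : Aˣ) : A) * kap q (T i) = ν • kap q (T i))
    (hκup : ∀ i, 1 ≤ i → i + 2 ≤ n →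
      kap q (T i) * (T (i + 1) : A) * kap q (T i) = ν⁻¹ • kap q (T i) ∧
      kap q (T i) * (((T (i + 1))⁻¹ : Aˣ) : A) * kap q (T i) = ν • kap q (T i)) :
    (∀ i j, 1 ≤ i → i ≤ n → 1 ≤ j → j ≤ n →
      jmy T i * jmy T j = jmy T j * jmy T i) ∧
    (∀ j, 1 ≤ j → j + 1 ≤ n →
      kap q (T j) * jmy T (j + 1) * jmy T j = (ν ^ 2) • kap q (T j) ∧
      jmy T j * jmy T (j + 1) * kap q (T j) = (ν ^ 2) • kap q (T j)) := by
  have hδ : q - q⁻¹ ≠ 0 := by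
    intro h
    apply hq1
    field_simp at h
    linear_combination h
  -- expansion of `T - T⁻¹` via `kap`
  have hsub : ∀ x : Aˣ, (x : A) - ((x⁻¹ : Aˣ) : A)
      = (q - q⁻¹) • (1:A) - (q - q⁻¹) • kap q x := by
    intro x
    have h : (q - q⁻¹) • kap q x = (q - q⁻¹) • (1:A) - ((x:A) - ((x⁻¹ : Aˣ):A)) := by
      rw [kap, smul_sub, smul_smul, mul_inv_cancel₀ hδ, one_smul]
    rw [h]; abel
  -- quadratic relation
  have quad : ∀ i, 1 ≤ i → i + 1 ≤ n → (T i : A) * (T i : A)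
      = 1 + (q - q⁻¹) • (T i : A) - ((q - q⁻¹) * ν) • kap q (T i) := by
    intro i h1 h2
    have h4 := congrArg (· * (T i : A)) (hsub (T i))
    simp only [sub_mul, smul_mul_assoc, one_mul, Units.inv_mul] at h4
    rw [(hκT i h1 h2).1, smul_smul] at h4
    rw [sub_eq_iff_eq_add] at h4
    rw [h4]; abel
  -- far generators commute with y_k
  have Tcomm : ∀ k m, k + 1 ≤ m → m + 1 ≤ n → Commute ((T m : A)) (jmy T k) := by
    intro k
    induction k with
    | zero => intro m _ _; simp only [jmy]; exact Commute.one_right _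
    | succ k ih =>
      intro m hm hn'
      match k, ih with
      | 0, _ => simp only [jmy]; exact Commute.one_right _
      | (k'+1), ih =>
        have h1 : Commute ((T m : A)) ((T (k'+1) : A)) :=
          (hcomm (k'+1) m (by omega) hn' (by omega)).symm
        have h2 := ih m (by omega) hn'
        show Commute _ (jmy T (k'+1+1))
        simp only [jmy]
        exact (h1.mul_right h2).mul_right h1
  -- shift lemmas
  have shiftL : ∀ i, 1 ≤ i → i + 2 ≤ n →
      kap q (T (i+1)) * (T i : A) * (T (i+1) : A)
        = (T i : A) * (T (i+1) : A) * kap q (T i) := by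
    intro i h1 h2
    have hb := hbraid i h1 h2
    have e1 : (((T (i+1))⁻¹:Aˣ):A)*(T i)*(T (i+1)) = (T i:A)*(T (i+1))*(((T i)⁻¹:Aˣ):A) := by
      have h3 : (((T (i+1))⁻¹:Aˣ):A)*((T i:A)*(T (i+1))*(T i))*(((T i)⁻¹:Aˣ):A)
          = (((T (i+1))⁻¹:Aˣ):A)*(T i)*(T (i+1)) := by simp [mul_assoc]
      have h4 : (((T (i+1))⁻¹:Aˣ):A)*((T (i+1):A)*(T i)*(T (i+1)))*(((T i)⁻¹:Aˣ):A)
          = (T i:A)*(T (i+1))*(((T i)⁻¹:Aˣ):A) := by simp [← mul_assoc]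
      rw [← h3, hb, h4]
    rw [kap, kap]
    simp only [sub_mul, mul_sub, one_mul, mul_one, smul_mul_assoc, mul_smul_comm]
    congr 1
    congr 1
    rw [e1, ← hb]
  have shiftR : ∀ i, 1 ≤ i → i + 2 ≤ n →
      kap q (T i) * (T (i+1) : A) * (T i : A)
        = (T (i+1) : A) * (T i : A) * kap q (T (i+1)) := by
    intro i h1 h2
    have hb := hbraid i h1 h2
    have e1 : (((T i)⁻¹:Aˣ):A)*(T (i+1))*(T i) = (T (i+1):A)*(T i)*(((T (i+1))⁻¹:Aˣ):A) := by
      have h3 : (((T i)⁻¹:Aˣ):A)*((T (i+1):A)*(T i)*(T (i+1)))*(((T (i+1))⁻¹:Aˣ):A)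
          = (((T i)⁻¹:Aˣ):A)*(T (i+1))*(T i) := by simp [mul_assoc]
      have h4 : (((T i)⁻¹:Aˣ):A)*((T i:A)*(T (i+1))*(T i))*(((T (i+1))⁻¹:Aˣ):A)
          = (T (i+1):A)*(T i)*(((T (i+1))⁻¹:Aˣ):A) := by simp [← mul_assoc]
      rw [← h3, ← hb, h4]
    rw [kap, kap]
    simp only [sub_mul, mul_sub, one_mul, mul_one, smul_mul_assoc, mul_smul_comm]
    congr 1
    congr 1
    rw [e1, hb]
  -- e_i e_{i+1} identity
  have ee : ∀ i, 1 ≤ i → i + 2 ≤ n →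
      kap q (T i) * kap q (T (i+1))
        = (((T (i+1))⁻¹:Aˣ):A) * (((T i)⁻¹:Aˣ):A) * kap q (T (i+1)) := by
    intro i h1 h2
    have h5 : (T i : A) * ((T (i+1) : A) * (kap q (T i) * kap q (T (i+1))))
        = kap q (T (i+1)) := by
      have h6 := congrArg (· * kap q (T (i+1))) (shiftL i h1 h2)
      rw [mul_assoc (kap q (T (i+1)) * (T i : A))] at h6
      rw [(hκT (i+1) (by omega) h2).2, mul_smul_comm, mul_assoc] at h6
      have hd : kap q (T (i+1)) * ((T i : A) * kap q (T (i+1))) = ν⁻¹ • kap q (T (i+1)) := by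
        rw [← mul_assoc]; exact (hκdown (i+1) (by omega) h2).1
      rw [hd, smul_smul, mul_inv_cancel₀ hν0, one_smul] at h6
      simp only [mul_assoc] at h6
      exact h6.symm
    calc kap q (T i) * kap q (T (i+1))
        = (((T (i+1))⁻¹:Aˣ):A) * ((((T i)⁻¹:Aˣ):A) *
            ((T i : A) * ((T (i+1) : A) * (kap q (T i) * kap q (T (i+1)))))) := by
          rw [Units.inv_mul_cancel_left, Units.inv_mul_cancel_left]
      _ = (((T (i+1))⁻¹:Aˣ):A) * (((T i)⁻¹:Aˣ):A) * kap q (T (i+1)) := by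
          rw [h5, mul_assoc]
  -- the key induction: κ_j (y_j T_j y_j) = (y_j T_j y_j) κ_j = ν κ_j
  have Pboth : ∀ j, 1 ≤ j → j + 1 ≤ n →
      kap q (T j) * (jmy T j * (T j : A) * jmy T j) = ν • kap q (T j) ∧
      (jmy T j * (T j : A) * jmy T j) * kap q (T j) = ν • kap q (T j) := by
    intro j
    induction j with
    | zero => exact fun h _ => absurd h (by omega)
    | succ m ih =>
      intro h1 h2
      match m, ih with
      | 0, _ =>
        constructor
        · simpa [jmy] using (hκT 1 (by omega) (by omega)).1
        · simpa [jmy] using (hκT 1 (by omega) (by omega)).2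
      | (m'+1), ih =>
        have hcore := jmy_kap_core (q - q⁻¹) ν hν0 (T (m'+2)) (T (m'+1)) (jmy T (m'+1))
          (kap q (T (m'+2))) (kap q (T (m'+1)))
          (hbraid (m'+1) (by omega) (by omega))
          ((Tcomm (m'+1) (m'+2) (by omega) (by omega)).eq)
          (shiftL (m'+1) (by omega) (by omega))
          (shiftR (m'+1) (by omega) (by omega))
          (ih (by omega) (by omega)).1
          (ih (by omega) (by omega)).2
          (quad (m'+2) (by omega) (by omega))
          (quad (m'+1) (by omega) (by omega))
          (hκT (m'+2) (by omega) (by omega)).2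
          (hκdown (m'+2) (by omega) (by omega)).1
          (hκdown (m'+2) (by omega) (by omega)).2
          (ee (m'+1) (by omega) (by omega))
          (hsub (T (m'+2)))
          (hsub (T (m'+1)))
        constructor
        · simpa only [jmy] using hcore.1
        · simpa only [jmy] using hcore.2
  -- neighbouring Jucys–Murphy elements commute
  have CC : ∀ i, 1 ≤ i → i + 1 ≤ n → jmy T (i+1) * jmy T i = jmy T i * jmy T (i+1) := by
    intro i
    induction i with
    | zero => exact fun h _ => absurd h (by omega)
    | succ m ih =>
      intro h1 h2
      match m, ih with
      | 0, _ => simp [jmy]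
      | (m'+1), ih =>
        have hcc0 := ih (by omega) (by omega)
        have hcc : (T (m'+1) : A) * jmy T (m'+1) * (T (m'+1) : A) * jmy T (m'+1)
            = jmy T (m'+1) * ((T (m'+1) : A) * jmy T (m'+1) * (T (m'+1) : A)) := by
          have h3 : jmy T (m'+2) * jmy T (m'+1) = jmy T (m'+1) * jmy T (m'+2) := hcc0
          simp only [jmy] at h3
          simp only [mul_assoc] at h3 ⊢
          exact h3
        have := jmy_comm_core (T (m'+2)) (T (m'+1)) (jmy T (m'+1))
          (hbraid (m'+1) (by omega) (by omega))
          ((Tcomm (m'+1) (m'+2) (by omega) (by omega)).eq)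
          hcc
        show jmy T (m'+3) * jmy T (m'+2) = jmy T (m'+2) * jmy T (m'+3)
        simp only [jmy]
        exact this
  -- general commutation
  have Ycomm : ∀ d i, 1 ≤ i → i + d ≤ n → jmy T i * jmy T (i + d) = jmy T (i + d) * jmy T i := by
    intro d
    induction d with
    | zero => intro i _ _; rfl
    | succ d ih =>
      intro i hi hn'
      match d, ih with
      | 0, _ => exact (CC i hi (by omega)).symm
      | (d'+1), ih =>
        have c1 : Commute (jmy T i) ((T (i + d' + 1) : A)) :=
          (Tcomm i (i + d' + 1) (by omega) (by omega)).symm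
        have c2 : Commute (jmy T i) (jmy T (i + d' + 1)) := by
          have h2 := ih i hi (by omega)
          rw [show i + (d' + 1) = i + d' + 1 from by omega] at h2
          exact h2
        have c3 : Commute (jmy T i)
            ((T (i + d' + 1) : A) * jmy T (i + d' + 1) * (T (i + d' + 1) : A)) :=
          (c1.mul_right c2).mul_right c1
        have e0 : jmy T (i + (d' + 2))
            = (T (i + d' + 1) : A) * jmy T (i + d' + 1) * (T (i + d' + 1) : A) := by
          rw [show i + (d' + 2) = (i + d') + 2 from by omega]
          rfl
        rw [show i + (d' + 1 + 1) = i + (d' + 2) from by omega, e0]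
        exact c3.eq
  refine ⟨?_, ?_⟩
  · intro i j hi hin hj hjn
    rcases le_total i j with h | h
    · have h2 := Ycomm (j - i) i hi (by omega)
      rw [show i + (j - i) = j from by omega] at h2
      exact h2
    · have h2 := Ycomm (i - j) j hj (by omega)
      rw [show j + (i - j) = i from by omega] at h2
      exact h2.symm
  · intro j hj hjn
    obtain ⟨m, rfl⟩ : ∃ m, j = m + 1 := ⟨j - 1, by omega⟩
    have hP := Pboth (m + 1) (by omega) hjn
    have e0 : jmy T (m + 1 + 1) = (T (m + 1) : A) * jmy T (m + 1) * (T (m + 1) : A) := rfl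
    constructor
    · calc kap q (T (m+1)) * jmy T (m+1+1) * jmy T (m+1)
          = kap q (T (m+1)) * ((T (m+1) : A) * jmy T (m+1) * (T (m+1) : A)) * jmy T (m+1) := by
            rw [e0]
        _ = (kap q (T (m+1)) * (T (m+1) : A))
              * (jmy T (m+1) * (T (m+1) : A) * jmy T (m+1)) := by
            simp only [mul_assoc]
        _ = (ν • kap q (T (m+1))) * (jmy T (m+1) * (T (m+1) : A) * jmy T (m+1)) := by
            rw [(hκT (m+1) (by omega) hjn).1]
        _ = ν • (kap q (T (m+1)) * (jmy T (m+1) * (T (m+1) : A) * jmy T (m+1))) := by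
            rw [smul_mul_assoc]
        _ = ν • (ν • kap q (T (m+1))) := by rw [hP.1]
        _ = (ν ^ 2) • kap q (T (m+1)) := by rw [smul_smul, sq]
    · calc jmy T (m+1) * jmy T (m+1+1) * kap q (T (m+1))
          = jmy T (m+1) * ((T (m+1) : A) * jmy T (m+1) * (T (m+1) : A)) * kap q (T (m+1)) := by
            rw [e0]
        _ = (jmy T (m+1) * (T (m+1) : A) * jmy T (m+1))
              * ((T (m+1) : A) * kap q (T (m+1))) := by
            simp only [mul_assoc]
        _ = (jmy T (m+1) * (T (m+1) : A) * jmy T (m+1)) * (ν • kap q (T (m+1))) := by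
            rw [(hκT (m+1) (by omega) hjn).2]
        _ = ν • ((jmy T (m+1) * (T (m+1) : A) * jmy T (m+1)) * kap q (T (m+1))) := by
            rw [mul_smul_comm]
        _ = ν • (ν • kap q (T (m+1))) := by rw [hP.2]
        _ = (ν ^ 2) • kap q (T (m+1)) := by rw [smul_smul, sq]
end
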